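/- arXiv:2005.02043 — 4 statements merged into one kernel-verified Lean document; each statement's English description precedes it below -/
import Mathlib

section
/- Let $\lambda$ be a Young diagram containing the box $(2,2)$, and let $(X_{i,j})_{(i,j)\in\lambda}$ be i.i.d. non-negative non-deterministic random variables. Define $L_{i,j}$ as the maximum over directed lattice paths from $(1,1)$ to $(i,j)$ of the sum of weights on the path, and $L^*_{i,j}$ as the maximum over directed lattice paths from $(i,1)$ to $(1,j)$ of the sum of weights. Then the tableaux $(L_{i,j})_{(i,j)\in\lambda}$ and $(L^*_{i,j})_{(i,j)\in\lambda}$ do not have the same joint distribution. -/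
/-- Two boxes differ by a unit step. -/
def isStep (p q : ℕ × ℕ) : Prop :=
  (q.1 = p.1 + 1 ∧ q.2 = p.2) ∨ (q.1 = p.1 ∧ q.2 = p.2 + 1) ∨
  (p.1 = q.1 + 1 ∧ p.2 = q.2) ∨ (p.1 = q.1 ∧ p.2 = q.2 + 1)

/-- A directed lattice path from `(a,b)` to `(c,d)`: a sequence of boxes of minimal
length `|c-a| + |d-b|` (hence `|c-a| + |d-b| + 1` boxes) with unit steps. -/
def IsDirectedPath (a b c d : ℕ) (π : List (ℕ × ℕ)) : Prop :=
  π.length = ((c : ℤ) - a).natAbs + ((d : ℤ) - b).natAbs + 1 ∧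
  π.head? = some (a, b) ∧ π.getLast? = some (c, d) ∧
  ∀ k, (h : k + 1 < π.length) →
    isStep (π.get ⟨k, Nat.lt_of_succ_lt h⟩) (π.get ⟨k + 1, h⟩)

/-- Last passage percolation time from `(a,b)` to `(c,d)` for weights `w`. -/
noncomputable def lpp (w : ℕ × ℕ → ℝ) (a b c d : ℕ) : ℝ :=
  sSup {S : ℝ | ∃ π : List (ℕ × ℕ), IsDirectedPath a b c d π ∧ S = (π.map w).sum}

/-- A Young diagram: a finite set of boxes `(i,j)`, `i,j ≥ 1`, closed under
decreasing either coordinate. -/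
def IsYoungDiagram (Λ : Finset (ℕ × ℕ)) : Prop :=
  (∀ p ∈ Λ, 1 ≤ p.1 ∧ 1 ≤ p.2) ∧
  ∀ p ∈ Λ, ∀ i j : ℕ, 1 ≤ i → 1 ≤ j → i ≤ p.1 → j ≤ p.2 → (i, j) ∈ Λ

/-- Last passage percolation time from `(a,b)` to `(c,d)` over paths staying in `Λ`. -/
noncomputable def lppIn (Λ : Finset (ℕ × ℕ)) (w : ℕ × ℕ → ℝ) (a b c d : ℕ) : ℝ :=
  sSup {S : ℝ | ∃ π : List (ℕ × ℕ), IsDirectedPath a b c d π ∧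
    (∀ p ∈ π, p ∈ Λ) ∧ S = (π.map w).sum}

-- path of length 1 (a,b)=(c,d)
lemma path_len1 {a b : ℕ} {π : List (ℕ × ℕ)} (h : IsDirectedPath a b a b π) :
    π = [(a, b)] := by
  obtain ⟨hlen, hhead, -, -⟩ := h
  have : π.length = 1 := by simpa using hlen
  rcases π with _|⟨p,_|t⟩ <;> simp_all

lemma path_len2 {a b c d : ℕ} (hlen2 : ((c : ℤ) - a).natAbs + ((d : ℤ) - b).natAbs = 1)
    {π : List (ℕ × ℕ)} (h : IsDirectedPath a b c d π) : π = [(a, b), (c, d)] := by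
  obtain ⟨hlen, hhead, hlast, -⟩ := h
  rw [hlen2] at hlen
  rcases π with _|⟨p,_|⟨q,_|t⟩⟩ <;> simp_all

lemma path_len3 {a b c d : ℕ} (hlen3 : ((c : ℤ) - a).natAbs + ((d : ℤ) - b).natAbs = 2)
    {π : List (ℕ × ℕ)} (h : IsDirectedPath a b c d π) :
    ∃ q, π = [(a, b), q, (c, d)] ∧ isStep (a, b) q ∧ isStep q (c, d) := by
  obtain ⟨hlen, hhead, hlast, hstep⟩ := h
  rw [hlen3] at hlen
  rcases π with _|⟨p,_|⟨q,_|⟨r,_|t⟩⟩⟩ <;> simp_all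
  obtain ⟨rfl, rfl⟩ := hhead
  refine ⟨by simpa using hstep 0 (by norm_num), by simpa using hstep 1 (by norm_num)⟩

lemma dp_single (a b : ℕ) : IsDirectedPath a b a b [(a, b)] := by
  refine ⟨by simp, rfl, rfl, ?_⟩
  intro k h; simp at h

lemma dp_two {a b c d : ℕ} (hlen2 : ((c : ℤ) - a).natAbs + ((d : ℤ) - b).natAbs = 1)
    (hs : isStep (a, b) (c, d)) : IsDirectedPath a b c d [(a, b), (c, d)] := by
  refine ⟨by simp [hlen2], rfl, rfl, ?_⟩
  intro k h
  simp at h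
  have hk : k = 0 := by omega
  subst hk
  simpa using hs

lemma dp_three {a b c d : ℕ} (q : ℕ × ℕ)
    (hlen3 : ((c : ℤ) - a).natAbs + ((d : ℤ) - b).natAbs = 2)
    (h1 : isStep (a, b) q) (h2 : isStep q (c, d)) :
    IsDirectedPath a b c d [(a, b), q, (c, d)] := by
  refine ⟨by simp [hlen3], rfl, rfl, ?_⟩
  intro k h
  simp at h
  have hk : k = 0 ∨ k = 1 := by omega
  rcases hk with rfl | rfl
  · simpa using h1
  · simpa using h2

section Eval
variable {Λ : Finset (ℕ × ℕ)} (w : ℕ × ℕ → ℝ)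

lemma lppIn_1111 (h11 : (1, 1) ∈ Λ) : lppIn Λ w 1 1 1 1 = w (1, 1) := by
  have hset : {S : ℝ | ∃ π : List (ℕ × ℕ), IsDirectedPath 1 1 1 1 π ∧
      (∀ p ∈ π, p ∈ Λ) ∧ S = (π.map w).sum} = {w (1, 1)} := by
    ext S
    constructor
    · rintro ⟨π, hπ, -, rfl⟩
      rw [path_len1 hπ]; simp
    · rintro rfl
      exact ⟨[(1, 1)], dp_single 1 1, by simpa using h11, by simp⟩
  rw [lppIn, hset, csSup_singleton]

lemma lppIn_1112 (h11 : (1, 1) ∈ Λ) (h12 : (1, 2) ∈ Λ) :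
    lppIn Λ w 1 1 1 2 = w (1, 1) + w (1, 2) := by
  have hset : {S : ℝ | ∃ π : List (ℕ × ℕ), IsDirectedPath 1 1 1 2 π ∧
      (∀ p ∈ π, p ∈ Λ) ∧ S = (π.map w).sum} = {w (1, 1) + w (1, 2)} := by
    ext S
    constructor
    · rintro ⟨π, hπ, -, rfl⟩
      rw [path_len2 (by norm_num) hπ]; simp
    · rintro rfl
      refine ⟨[(1, 1), (1, 2)], dp_two (by norm_num) (by simp [isStep]), ?_, by simp⟩
      intro p hp; simp at hp; rcases hp with rfl | rfl <;> assumption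
  rw [lppIn, hset, csSup_singleton]

lemma lppIn_1121 (h11 : (1, 1) ∈ Λ) (h21 : (2, 1) ∈ Λ) :
    lppIn Λ w 1 1 2 1 = w (1, 1) + w (2, 1) := by
  have hset : {S : ℝ | ∃ π : List (ℕ × ℕ), IsDirectedPath 1 1 2 1 π ∧
      (∀ p ∈ π, p ∈ Λ) ∧ S = (π.map w).sum} = {w (1, 1) + w (2, 1)} := by
    ext S
    constructor
    · rintro ⟨π, hπ, -, rfl⟩
      rw [path_len2 (by norm_num) hπ]; simp
    · rintro rfl
      refine ⟨[(1, 1), (2, 1)], dp_two (by norm_num) (by simp [isStep]), ?_, by simp⟩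
      intro p hp; simp at hp; rcases hp with rfl | rfl <;> assumption
  rw [lppIn, hset, csSup_singleton]

lemma lppIn_2111 (h11 : (1, 1) ∈ Λ) (h21 : (2, 1) ∈ Λ) :
    lppIn Λ w 2 1 1 1 = w (2, 1) + w (1, 1) := by
  have hset : {S : ℝ | ∃ π : List (ℕ × ℕ), IsDirectedPath 2 1 1 1 π ∧
      (∀ p ∈ π, p ∈ Λ) ∧ S = (π.map w).sum} = {w (2, 1) + w (1, 1)} := by
    ext S
    constructor
    · rintro ⟨π, hπ, -, rfl⟩
      rw [path_len2 (by norm_num) hπ]; simp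
    · rintro rfl
      refine ⟨[(2, 1), (1, 1)], dp_two (by norm_num) (by simp [isStep]), ?_, by simp⟩
      intro p hp; simp at hp; rcases hp with rfl | rfl <;> assumption
  rw [lppIn, hset, csSup_singleton]

lemma mid_1122 {q : ℕ × ℕ} (h1 : isStep (1, 1) q) (h2 : isStep q (2, 2)) :
    q = (1, 2) ∨ q = (2, 1) := by
  obtain ⟨q1, q2⟩ := q
  simp only [isStep, Prod.mk.injEq] at h1 h2 ⊢
  omega

lemma mid_2112 {q : ℕ × ℕ} (h1 : isStep (2, 1) q) (h2 : isStep q (1, 2)) :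
    q = (1, 1) ∨ q = (2, 2) := by
  obtain ⟨q1, q2⟩ := q
  simp only [isStep, Prod.mk.injEq] at h1 h2 ⊢
  omega

lemma lppIn_1122 (h11 : (1, 1) ∈ Λ) (h12 : (1, 2) ∈ Λ) (h21 : (2, 1) ∈ Λ)
    (h22 : (2, 2) ∈ Λ) :
    lppIn Λ w 1 1 2 2
      = max (w (1, 1) + (w (1, 2) + w (2, 2))) (w (1, 1) + (w (2, 1) + w (2, 2))) := by
  have hset : {S : ℝ | ∃ π : List (ℕ × ℕ), IsDirectedPath 1 1 2 2 π ∧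
      (∀ p ∈ π, p ∈ Λ) ∧ S = (π.map w).sum}
      = {w (1, 1) + (w (1, 2) + w (2, 2)), w (1, 1) + (w (2, 1) + w (2, 2))} := by
    ext S
    constructor
    · rintro ⟨π, hπ, -, rfl⟩
      obtain ⟨q, rfl, hs1, hs2⟩ := path_len3 (by norm_num) hπ
      rcases mid_1122 hs1 hs2 with rfl | rfl <;> simp
    · rintro (rfl | rfl)
      · refine ⟨[(1, 1), (1, 2), (2, 2)],
          dp_three _ (by norm_num) (by simp [isStep]) (by simp [isStep]), ?_, by simp⟩
        intro p hp; simp at hp; rcases hp with rfl | rfl | rfl <;> assumption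
      · refine ⟨[(1, 1), (2, 1), (2, 2)],
          dp_three _ (by norm_num) (by simp [isStep]) (by simp [isStep]), ?_, by simp⟩
        intro p hp; simp at hp; rcases hp with rfl | rfl | rfl <;> assumption
  rw [lppIn, hset, csSup_pair]

lemma lppIn_2112 (h11 : (1, 1) ∈ Λ) (h12 : (1, 2) ∈ Λ) (h21 : (2, 1) ∈ Λ)
    (h22 : (2, 2) ∈ Λ) :
    lppIn Λ w 2 1 1 2
      = max (w (2, 1) + (w (1, 1) + w (1, 2))) (w (2, 1) + (w (2, 2) + w (1, 2))) := by
  have hset : {S : ℝ | ∃ π : List (ℕ × ℕ), IsDirectedPath 2 1 1 2 π ∧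
      (∀ p ∈ π, p ∈ Λ) ∧ S = (π.map w).sum}
      = {w (2, 1) + (w (1, 1) + w (1, 2)), w (2, 1) + (w (2, 2) + w (1, 2))} := by
    ext S
    constructor
    · rintro ⟨π, hπ, -, rfl⟩
      obtain ⟨q, rfl, hs1, hs2⟩ := path_len3 (by norm_num) hπ
      rcases mid_2112 hs1 hs2 with rfl | rfl <;> simp
    · rintro (rfl | rfl)
      · refine ⟨[(2, 1), (1, 1), (1, 2)],
          dp_three _ (by norm_num) (by simp [isStep]) (by simp [isStep]), ?_, by simp⟩
        intro p hp; simp at hp; rcases hp with rfl | rfl | rfl <;> assumption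
      · refine ⟨[(2, 1), (2, 2), (1, 2)],
          dp_three _ (by norm_num) (by simp [isStep]) (by simp [isStep]), ?_, by simp⟩
        intro p hp; simp at hp; rcases hp with rfl | rfl | rfl <;> assumption
  rw [lppIn, hset, csSup_pair]

end Eval

lemma measurable_pathsum {Ω : Type*} [MeasurableSpace Ω] (X : ℕ × ℕ → Ω → ℝ)
    (hX : ∀ p, Measurable (X p)) (π : List (ℕ × ℕ)) :
    Measurable fun ω => ((π.map fun q => X q ω).sum) := by
  induction π with
  | nil => simpa using measurable_const
  | cons hd tl ih => simp only [List.map_cons, List.sum_cons]; exact (hX hd).add ih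

lemma lppIn_measurable {Ω : Type*} [MeasurableSpace Ω] (Λ : Finset (ℕ × ℕ))
    (X : ℕ × ℕ → Ω → ℝ) (hX : ∀ p, Measurable (X p)) (a b c d : ℕ) :
    Measurable fun ω => lppIn Λ (fun q => X q ω) a b c d := by
  have hrw : ∀ ω : Ω, {S : ℝ | ∃ π : List (ℕ × ℕ), IsDirectedPath a b c d π ∧
      (∀ p ∈ π, p ∈ Λ) ∧ S = (π.map fun q => X q ω).sum}
      = (fun π : List (ℕ × ℕ) => (π.map fun q => X q ω).sum) ''
        {π | IsDirectedPath a b c d π ∧ ∀ p ∈ π, p ∈ Λ} := by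
    intro ω
    ext S
    constructor
    · rintro ⟨π, h1, h2, rfl⟩; exact ⟨π, ⟨h1, h2⟩, rfl⟩
    · rintro ⟨π, ⟨h1, h2⟩, rfl⟩; exact ⟨π, h1, h2, rfl⟩
  simp only [lppIn, hrw]
  exact Measurable.sSup (Set.to_countable _) fun π _ => measurable_pathsum X hX π

open MeasureTheory in
lemma exists_split (μ : Measure ℝ) [IsProbabilityMeasure μ]
    (h : ∀ x : ℝ, μ ≠ Measure.dirac x) :
    ∃ t : ℝ, 0 < μ (Set.Iic t) ∧ 0 < μ (Set.Ioi t) := by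
  by_contra hcon
  push_neg at hcon
  have hdich : ∀ t : ℝ, μ (Set.Iic t) = 0 ∨ μ (Set.Iic t) = 1 := by
    intro t
    rcases eq_or_ne (μ (Set.Iic t)) 0 with h0 | h0
    · exact Or.inl h0
    · right
      have hIoi : μ (Set.Ioi t) = 0 :=
        le_antisymm (hcon t (pos_iff_ne_zero.mpr h0)) zero_le
      rw [← Set.compl_Iic] at hIoi
      exact (prob_compl_eq_zero_iff measurableSet_Iic).mp hIoi
  have hIic_one_of_Ioi : ∀ t : ℝ, μ (Set.Ioi t) ≠ 0 → μ (Set.Iic t) = 0 := by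
    intro t ht
    rcases hdich t with h0 | h1
    · exact h0
    · exact absurd ((prob_compl_eq_zero_iff measurableSet_Iic).mpr h1)
        (by rwa [Set.compl_Iic])
  have hIoi_zero_of_one : ∀ t : ℝ, μ (Set.Iic t) = 1 → μ (Set.Ioi t) = 0 := by
    intro t h1
    have := (prob_compl_eq_zero_iff measurableSet_Iic).mpr h1
    rwa [Set.compl_Iic] at this
  -- s is nonempty
  have huniv1 : Set.univ = ⋃ n : ℕ, Set.Iic (n : ℝ) := by
    ext x
    simp only [Set.mem_univ, Set.mem_iUnion, Set.mem_Iic, true_iff]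
    exact exists_nat_ge x
  have sne : ∃ t : ℝ, μ (Set.Iic t) = 1 := by
    by_contra h'
    push_neg at h'
    have hz : ∀ n : ℕ, μ (Set.Iic (n : ℝ)) = 0 := fun n => (hdich n).resolve_right (h' n)
    have : μ Set.univ = 0 := by
      rw [huniv1]; exact measure_iUnion_null hz
    simp at this
  obtain ⟨t₀, ht₀⟩ := sne
  set s : Set ℝ := {t : ℝ | μ (Set.Iic t) = 1} with hs
  have sne' : s.Nonempty := ⟨t₀, ht₀⟩
  -- s is bounded below
  have huniv2 : Set.univ = ⋃ n : ℕ, Set.Ioi (-(n : ℝ)) := by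
    ext x
    simp only [Set.mem_univ, Set.mem_iUnion, Set.mem_Ioi, true_iff]
    obtain ⟨n, hn⟩ := exists_nat_gt (-x)
    exact ⟨n, by linarith⟩
  have hbdd : BddBelow s := by
    have : ∃ n : ℕ, μ (Set.Ioi (-(n : ℝ))) ≠ 0 := by
      by_contra h'
      push_neg at h'
      have : μ Set.univ = 0 := by rw [huniv2]; exact measure_iUnion_null h'
      simp at this
    obtain ⟨m, hm⟩ := this
    refine ⟨-(m : ℝ), fun t ht => ?_⟩
    by_contra hlt
    push_neg at hlt
    have : μ (Set.Iic t) = 0 :=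
      measure_mono_null (Set.Iic_subset_Iic.mpr hlt.le) (hIic_one_of_Ioi _ hm)
    rw [hs] at ht
    simp only [Set.mem_setOf_eq] at ht
    rw [ht] at this
    exact one_ne_zero this
  set c : ℝ := sInf s with hc
  have hlow : ∀ t : ℝ, t < c → μ (Set.Iic t) = 0 := by
    intro t ht
    rcases hdich t with h0 | h1
    · exact h0
    · exact absurd (csInf_le hbdd h1) (not_le.mpr ht)
  have hIio : μ (Set.Iio c) = 0 := by
    have : Set.Iio c = ⋃ n : ℕ, Set.Iic (c - 1 / (n + 1)) := by
      ext x
      simp only [Set.mem_Iio, Set.mem_iUnion, Set.mem_Iic]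
      constructor
      · intro hx
        obtain ⟨n, hn⟩ := exists_nat_one_div_lt (sub_pos.mpr hx)
        exact ⟨n, by push_cast at hn ⊢; linarith⟩
      · rintro ⟨n, hn⟩
        have : (0 : ℝ) < 1 / (n + 1) := by positivity
        linarith
    rw [this]
    refine measure_iUnion_null fun n => hlow _ ?_
    have : (0 : ℝ) < 1 / (n + 1) := by positivity
    linarith
  have hIoi : μ (Set.Ioi c) = 0 := by
    have hU : Set.Ioi c = ⋃ n : ℕ, Set.Ioi (c + 1 / (n + 1)) := by
      ext x
      simp only [Set.mem_Ioi, Set.mem_iUnion]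
      constructor
      · intro hx
        obtain ⟨n, hn⟩ := exists_nat_one_div_lt (sub_pos.mpr hx)
        exact ⟨n, by push_cast at hn ⊢; linarith⟩
      · rintro ⟨n, hn⟩
        have : (0 : ℝ) < 1 / (n + 1) := by positivity
        linarith
    rw [hU]
    refine measure_iUnion_null fun n => ?_
    have hpos : (0 : ℝ) < 1 / (n + 1) := by positivity
    obtain ⟨t, hts, htlt⟩ := exists_lt_of_csInf_lt sne' (lt_add_of_pos_right c hpos)
    refine measure_mono_null (fun x hx => ?_) (hIoi_zero_of_one t hts)
    exact lt_trans htlt hx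
  have hcompl : μ ({c}ᶜ) = 0 := by
    rw [← Set.Iio_union_Ioi]
    exact measure_union_null hIio hIoi
  have hc1 : μ {c} = 1 := (prob_compl_eq_zero_iff (measurableSet_singleton c)).mp hcompl
  refine h c (Measure.ext fun A hA => ?_)
  rw [Measure.dirac_apply' _ hA]
  by_cases hcA : c ∈ A
  · rw [Set.indicator_of_mem hcA]
    refine le_antisymm prob_le_one ?_
    calc (1 : ENNReal) = μ {c} := hc1.symm
    _ ≤ μ A := measure_mono (Set.singleton_subset_iff.mpr hcA)
  · rw [Set.indicator_of_notMem hcA]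
    refine measure_mono_null (fun x hx => ?_) hcompl
    simp only [Set.mem_compl_iff, Set.mem_singleton_iff]
    rintro rfl
    exact hcA hx

open MeasureTheory ProbabilityTheory

/-- for a Young diagram `Λ` containing the box `(2,2)` and i.i.d.
non-negative, non-deterministic weights `(X p)_{p ∈ Λ}`, the LPP tableau
`(L_{i,j})_{(i,j) ∈ Λ}` (with `L_{i,j}` the LPP time from `(1,1)` to `(i,j)`) and the
dual LPP tableau `(L*_{i,j})_{(i,j) ∈ Λ}` (with `L*_{i,j}` the LPP time from `(i,1)` to
`(1,j)`) do not have the same joint distribution. -/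
theorem lpp_and_dual_lpp_tableaux_not_equidistributed
    {Ω : Type*} [MeasurableSpace Ω] (P : Measure Ω) [IsProbabilityMeasure P]
    (Λ : Finset (ℕ × ℕ)) (hΛ : IsYoungDiagram Λ) (h22 : (2, 2) ∈ Λ)
    (X : ℕ × ℕ → Ω → ℝ) (hmeas : ∀ p, Measurable (X p))
    (hindep : iIndepFun (fun p : ↥Λ => X ↑p) P)
    (μ : Measure ℝ) (hident : ∀ p ∈ Λ, Measure.map (X p) P = μ)
    (hnondirac : ∀ x : ℝ, μ ≠ Measure.dirac x)
    (hnonneg : ∀ p ∈ Λ, ∀ᵐ ω ∂P, 0 ≤ X p ω) :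
    Measure.map (fun ω => fun p : ↥Λ =>
        lppIn Λ (fun q => X q ω) 1 1 (p : ℕ × ℕ).1 (p : ℕ × ℕ).2) P ≠
      Measure.map (fun ω => fun p : ↥Λ =>
        lppIn Λ (fun q => X q ω) (p : ℕ × ℕ).1 1 1 (p : ℕ × ℕ).2) P := by
  classical
  intro hEq
  have h11 : (1, 1) ∈ Λ := hΛ.2 (2, 2) h22 1 1 le_rfl le_rfl one_le_two one_le_two
  have h12 : (1, 2) ∈ Λ := hΛ.2 (2, 2) h22 1 2 le_rfl one_le_two one_le_two le_rfl
  have h21 : (2, 1) ∈ Λ := hΛ.2 (2, 2) h22 2 1 one_le_two le_rfl le_rfl one_le_two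
  set q11 : ↥Λ := ⟨(1, 1), h11⟩ with hq11
  set q12 : ↥Λ := ⟨(1, 2), h12⟩ with hq12
  set q21 : ↥Λ := ⟨(2, 1), h21⟩ with hq21
  set q22 : ↥Λ := ⟨(2, 2), h22⟩ with hq22
  have hμ : IsProbabilityMeasure μ := by
    rw [← hident (1, 1) h11]
    exact Measure.isProbabilityMeasure_map (hmeas _).aemeasurable
  obtain ⟨t, htl, htr⟩ := exists_split μ hnondirac
  set F := fun ω => fun p : ↥Λ =>
      lppIn Λ (fun q => X q ω) 1 1 (p : ℕ × ℕ).1 (p : ℕ × ℕ).2 with hFdef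
  set G := fun ω => fun p : ↥Λ =>
      lppIn Λ (fun q => X q ω) (p : ℕ × ℕ).1 1 1 (p : ℕ × ℕ).2 with hGdef
  have hF : Measurable F :=
    measurable_pi_lambda _ fun p => lppIn_measurable Λ X hmeas _ _ _ _
  have hG : Measurable G :=
    measurable_pi_lambda _ fun p => lppIn_measurable Λ X hmeas _ _ _ _
  set A : Set (↥Λ → ℝ) := {g | g q22 + g q11 - g q12 - g q21 < 0} with hAdef
  have hAmeas : MeasurableSet A := by
    have hm : Measurable fun g : ↥Λ → ℝ => g q22 + g q11 - g q12 - g q21 :=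
      (((measurable_pi_apply q22).add (measurable_pi_apply q11)).sub
        (measurable_pi_apply q12)).sub (measurable_pi_apply q21)
    exact measurableSet_lt hm measurable_const
  have hkey : P (F ⁻¹' A) = P (G ⁻¹' A) := by
    rw [← Measure.map_apply hF hAmeas, ← Measure.map_apply hG hAmeas, hEq]
  -- the dual tableau never lies in A
  have hGempty : G ⁻¹' A = ∅ := by
    ext ω
    simp only [Set.mem_preimage, Set.mem_empty_iff_false, iff_false, hAdef,
      Set.mem_setOf_eq, not_lt]
    set w := fun q => X q ω with hw
    have e11 : G ω q11 = w (1, 1) := lppIn_1111 w h11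
    have e12 : G ω q12 = w (1, 1) + w (1, 2) := lppIn_1112 w h11 h12
    have e21 : G ω q21 = w (2, 1) + w (1, 1) := lppIn_2111 w h11 h21
    have e22 : G ω q22
        = max (w (2, 1) + (w (1, 1) + w (1, 2))) (w (2, 1) + (w (2, 2) + w (1, 2))) :=
      lppIn_2112 w h11 h12 h21 h22
    rw [e11, e12, e21, e22]
    have hmax := le_max_left (w (2, 1) + (w (1, 1) + w (1, 2)))
      (w (2, 1) + (w (2, 2) + w (1, 2)))
    linarith
  -- the event producing a negative value for the primal tableau
  have hEsub : (X (2, 2) ⁻¹' Set.Iic t) ∩ (X (1, 2) ⁻¹' Set.Ioi t)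
      ∩ (X (2, 1) ⁻¹' Set.Ioi t) ⊆ F ⁻¹' A := by
    rintro ω ⟨⟨h1, h2⟩, h3⟩
    simp only [Set.mem_preimage, Set.mem_Iic] at h1
    simp only [Set.mem_preimage, Set.mem_Ioi] at h2 h3
    simp only [Set.mem_preimage, hAdef, Set.mem_setOf_eq]
    set w := fun q => X q ω with hw
    have e11 : F ω q11 = w (1, 1) := lppIn_1111 w h11
    have e12 : F ω q12 = w (1, 1) + w (1, 2) := lppIn_1112 w h11 h12
    have e21 : F ω q21 = w (1, 1) + w (2, 1) := lppIn_1121 w h11 h21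
    have e22 : F ω q22
        = max (w (1, 1) + (w (1, 2) + w (2, 2))) (w (1, 1) + (w (2, 1) + w (2, 2))) :=
      lppIn_1122 w h11 h12 h21 h22
    rw [e11, e12, e21, e22]
    have hw22 : w (2, 2) ≤ t := h1
    have hw12 : t < w (1, 2) := h2
    have hw21 : t < w (2, 1) := h3
    have hmax : max (w (1, 1) + (w (1, 2) + w (2, 2))) (w (1, 1) + (w (2, 1) + w (2, 2)))
        < (w (1, 1) + w (1, 2)) + (w (1, 1) + w (2, 1)) - w (1, 1) :=
      max_lt (by linarith) (by linarith)
    linarith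
  -- positivity of that event
  have hprob : ∀ p, p ∈ Λ → ∀ s : Set ℝ, MeasurableSet s → P (X p ⁻¹' s) = μ s := by
    intro p hp s hsm
    rw [← hident p hp, Measure.map_apply (hmeas p) hsm]
  have hne1 : q22 ≠ q12 := fun h => by
    have := congrArg (fun x : ↥Λ => (x : ℕ × ℕ)) h; simp [hq22, hq12] at this
  have hne2 : q22 ≠ q21 := fun h => by
    have := congrArg (fun x : ↥Λ => (x : ℕ × ℕ)) h; simp [hq22, hq21] at this
  have hne3 : q12 ≠ q21 := fun h => by
    have := congrArg (fun x : ↥Λ => (x : ℕ × ℕ)) h; simp [hq12, hq21] at this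
  set sets : ↥Λ → Set ℝ := fun i => if i = q22 then Set.Iic t else Set.Ioi t with hsets
  have hsetsm : ∀ i : ↥Λ, i ∈ ({q22, q12, q21} : Finset ↥Λ) → MeasurableSet (sets i) := by
    intro i _
    by_cases h : i = q22 <;> simp [hsets, h]
  have hindep3 := hindep.measure_inter_preimage_eq_mul
    (S := ({q22, q12, q21} : Finset ↥Λ)) hsetsm
  have hInter : (⋂ i ∈ ({q22, q12, q21} : Finset ↥Λ), X (i : ℕ × ℕ) ⁻¹' sets i)
      = (X (2, 2) ⁻¹' Set.Iic t) ∩ (X (1, 2) ⁻¹' Set.Ioi t) ∩ (X (2, 1) ⁻¹' Set.Ioi t) := by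
    ext ω
    simp [hsets, hne1.symm, hne2.symm, hne3.symm, hq11, hq12, hq21, hq22, and_assoc]
  have hProd : (∏ i ∈ ({q22, q12, q21} : Finset ↥Λ), P (X (i : ℕ × ℕ) ⁻¹' sets i))
      = μ (Set.Iic t) * (μ (Set.Ioi t) * μ (Set.Ioi t)) := by
    rw [Finset.prod_insert (by simp [hne1, hne2]),
      Finset.prod_insert (by simp [hne3]), Finset.prod_singleton]
    simp only [hsets]
    rw [if_pos trivial, if_neg hne1.symm, if_neg hne2.symm]
    rw [hprob _ h22 _ measurableSet_Iic, hprob _ h12 _ measurableSet_Ioi,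
      hprob _ h21 _ measurableSet_Ioi]
  have hPE : 0 < P ((X (2, 2) ⁻¹' Set.Iic t) ∩ (X (1, 2) ⁻¹' Set.Ioi t)
      ∩ (X (2, 1) ⁻¹' Set.Ioi t)) := by
    rw [← hInter, hindep3, hProd]
    exact ENNReal.mul_pos htl.ne' (ENNReal.mul_pos htr.ne' htr.ne').ne'
  have h0 : P (F ⁻¹' A) = 0 := by rw [hkey, hGempty, measure_empty]
  exact absurd h0 (lt_of_lt_of_le hPE (measure_mono hEsub)).ne'
end

section
/- Take the square shape $\lambda = (2,2)$ and let $X_{1,1}, X_{1,2}, X_{2,1}, X_{2,2}$ be i.i.d. uniform on $\{0,1\}$. With $L$ the LPP tableau and $L^*$ the dual LPP tableau, one has $\mathbb{P}(L_{1,2}=2, L_{2,2}=3, L_{2,1}=1) = 2^{-4}$ whereas $\mathbb{P}(L^*_{1,2}=2, L^*_{2,2}=3, L^*_{2,1}=1) = 0$. In particular, the restrictions of $L$ and $L^*$ to the border strip $\{(2,1),(2,2),(1,2)\}$ are not equal in distribution. -/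
open MeasureTheory ProbabilityTheory

open scoped ENNReal

/-- on the 2×2 square with i.i.d. weights uniform on `{0,1}`
(`X 0 = X_{1,1}`, `X 1 = X_{1,2}`, `X 2 = X_{2,1}`, `X 3 = X_{2,2}`), writing
`L_{1,2} = X_{1,1}+X_{1,2}`, `L_{2,1} = X_{1,1}+X_{2,1}`,
`L_{2,2} = X_{1,1} + max(X_{1,2},X_{2,1}) + X_{2,2}`, and dually
`L*_{2,2} = X_{2,1} + max(X_{1,1},X_{2,2}) + X_{1,2}`, we have
`P(L_{1,2}=2, L_{2,2}=3, L_{2,1}=1) = 2⁻⁴` while the dual probability is `0`;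
in particular the border-strip restrictions of `L` and `L*` differ in distribution. -/
theorem square_bernoulli_lpp_counterexample
    {Ω : Type*} [MeasurableSpace Ω] (P : Measure Ω) [IsProbabilityMeasure P]
    (X : Fin 4 → Ω → ℝ) (hmeas : ∀ i, Measurable (X i))
    (hindep : iIndepFun X P)
    (hunif : ∀ i, Measure.map (X i) P
      = (2⁻¹ : ℝ≥0∞) • Measure.dirac (0 : ℝ) + (2⁻¹ : ℝ≥0∞) • Measure.dirac (1 : ℝ)) :
    P {ω | X 0 ω + X 1 ω = 2 ∧ X 0 ω + max (X 1 ω) (X 2 ω) + X 3 ω = 3 ∧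
        X 0 ω + X 2 ω = 1} = ((2 : ℝ≥0∞) ^ 4)⁻¹ ∧
    P {ω | X 0 ω + X 1 ω = 2 ∧ X 2 ω + max (X 0 ω) (X 3 ω) + X 1 ω = 3 ∧
        X 0 ω + X 2 ω = 1} = 0 ∧
    Measure.map (fun ω =>
        (X 0 ω + X 2 ω, X 0 ω + max (X 1 ω) (X 2 ω) + X 3 ω, X 0 ω + X 1 ω)) P ≠
      Measure.map (fun ω =>
        (X 0 ω + X 2 ω, X 2 ω + max (X 0 ω) (X 3 ω) + X 1 ω, X 0 ω + X 1 ω)) P := by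
  -- each X i is a.s. in {0,1}
  have hsupp : ∀ i, ∀ᵐ ω ∂P, X i ω = 0 ∨ X i ω = 1 := by
    intro i
    have hmeasset : MeasurableSet (({0, 1} : Set ℝ)ᶜ) :=
      (Set.Finite.measurableSet (by simp)).compl
    have h := congrArg (fun μ : Measure ℝ => μ (({0, 1} : Set ℝ)ᶜ)) (hunif i)
    simp only [Measure.map_apply (hmeas i) hmeasset] at h
    have h0 : P (X i ⁻¹' ({0, 1} : Set ℝ)ᶜ) = 0 := by
      rw [h]
      simp [Measure.dirac_apply]
    have : {ω | ¬(X i ω = 0 ∨ X i ω = 1)} ⊆ X i ⁻¹' ({0, 1} : Set ℝ)ᶜ := by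
      intro ω hω; simpa using hω
    have := measure_mono_null this h0
    simpa [ae_iff] using this
  have hgood : ∀ᵐ ω ∂P, ∀ i, X i ω = 0 ∨ X i ω = 1 := by
    rw [ae_all_iff]; exact hsupp
  -- singleton probabilities
  have key : ∀ (i : Fin 4) (v : ℝ), v = 0 ∨ v = 1 → P (X i ⁻¹' {v}) = 2⁻¹ := by
    intro i v hv
    have h := congrArg (fun μ : Measure ℝ => μ {v}) (hunif i)
    simp only [Measure.map_apply (hmeas i) (measurableSet_singleton v)] at h
    rw [h]
    rcases hv with rfl | rfl <;> simp [Measure.dirac_apply]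
  -- the product event
  set S : Fin 4 → Set ℝ := ![{1}, {1}, {0}, {1}] with hS
  have hSval : ∀ i, ∃ v : ℝ, (v = 0 ∨ v = 1) ∧ S i = {v} := by
    intro i; fin_cases i
    · exact ⟨1, Or.inr rfl, rfl⟩
    · exact ⟨1, Or.inr rfl, rfl⟩
    · exact ⟨0, Or.inl rfl, rfl⟩
    · exact ⟨1, Or.inr rfl, rfl⟩
  have hG : P (⋂ i, X i ⁻¹' S i) = ((2 : ℝ≥0∞) ^ 4)⁻¹ := by
    rw [hindep.meas_iInter]
    · have : ∀ i : Fin 4, P (X i ⁻¹' S i) = 2⁻¹ := by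
        intro i
        obtain ⟨v, hv, hvs⟩ := hSval i
        rw [hvs]; exact key i v hv
      rw [Fin.prod_univ_four, this 0, this 1, this 2, this 3, ENNReal.inv_pow]
      ring
    · intro i
      obtain ⟨v, hv, hvs⟩ := hSval i
      exact ⟨{v}, measurableSet_singleton v, by rw [hvs]⟩
  have hGmem : ∀ ω, ω ∈ (⋂ i, X i ⁻¹' S i) ↔
      (X 0 ω = 1 ∧ X 1 ω = 1 ∧ X 2 ω = 0 ∧ X 3 ω = 1) := by
    intro ω
    rw [Set.mem_iInter]
    constructor
    · intro h
      exact ⟨by simpa [S] using h 0, by simpa [S] using h 1, by simpa [S] using h 2,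
        by simpa [S] using h 3⟩
    · rintro ⟨a, b, c, d⟩ i
      fin_cases i <;> simp [S, a, b, c, d]
  -- first event a.e. equal to product event
  have hae1 : {ω | X 0 ω + X 1 ω = 2 ∧ X 0 ω + max (X 1 ω) (X 2 ω) + X 3 ω = 3 ∧
      X 0 ω + X 2 ω = 1} =ᵐ[P] (⋂ i, X i ⁻¹' S i) := by
    rw [Filter.eventuallyEq_set]
    filter_upwards [hgood] with ω hω
    rw [hGmem]
    obtain h0 | h0 := hω 0 <;> obtain h1 | h1 := hω 1 <;>
      obtain h2 | h2 := hω 2 <;> obtain h3 | h3 := hω 3 <;>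
      simp only [Set.mem_setOf_eq, h0, h1, h2, h3] <;> norm_num [max_def]
  have hP1 : P {ω | X 0 ω + X 1 ω = 2 ∧ X 0 ω + max (X 1 ω) (X 2 ω) + X 3 ω = 3 ∧
      X 0 ω + X 2 ω = 1} = ((2 : ℝ≥0∞) ^ 4)⁻¹ := by
    rw [measure_congr hae1]; exact hG
  -- second event is a.e. empty
  have hP2 : P {ω | X 0 ω + X 1 ω = 2 ∧ X 2 ω + max (X 0 ω) (X 3 ω) + X 1 ω = 3 ∧
      X 0 ω + X 2 ω = 1} = 0 := by
    rw [measure_eq_zero_iff_ae_notMem]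
    filter_upwards [hgood] with ω hω
    obtain h0 | h0 := hω 0 <;> obtain h1 | h1 := hω 1 <;>
      obtain h2 | h2 := hω 2 <;> obtain h3 | h3 := hω 3 <;>
      simp only [Set.mem_setOf_eq, h0, h1, h2, h3] <;> norm_num [max_def]
  refine ⟨hP1, hP2, ?_⟩
  intro heq
  have hT : MeasurableSet ({((1 : ℝ), (3 : ℝ), (2 : ℝ))} : Set (ℝ × ℝ × ℝ)) :=
    measurableSet_singleton _
  have hf1 : Measurable (fun ω =>
      (X 0 ω + X 2 ω, X 0 ω + max (X 1 ω) (X 2 ω) + X 3 ω, X 0 ω + X 1 ω)) :=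
    ((hmeas 0).add (hmeas 2)).prod
      ((((hmeas 0).add ((hmeas 1).max (hmeas 2))).add (hmeas 3)).prod
        ((hmeas 0).add (hmeas 1)))
  have hf2 : Measurable (fun ω =>
      (X 0 ω + X 2 ω, X 2 ω + max (X 0 ω) (X 3 ω) + X 1 ω, X 0 ω + X 1 ω)) :=
    ((hmeas 0).add (hmeas 2)).prod
      ((((hmeas 2).add ((hmeas 0).max (hmeas 3))).add (hmeas 1)).prod
        ((hmeas 0).add (hmeas 1)))
  have h1 := congrArg (fun μ : Measure (ℝ × ℝ × ℝ) =>
    μ ({((1 : ℝ), (3 : ℝ), (2 : ℝ))} : Set (ℝ × ℝ × ℝ))) heq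
  simp only [Measure.map_apply hf1 hT, Measure.map_apply hf2 hT] at h1
  have e1 : (fun ω => (X 0 ω + X 2 ω, X 0 ω + max (X 1 ω) (X 2 ω) + X 3 ω, X 0 ω + X 1 ω)) ⁻¹'
      ({((1 : ℝ), (3 : ℝ), (2 : ℝ))} : Set (ℝ × ℝ × ℝ)) =
      {ω | X 0 ω + X 1 ω = 2 ∧ X 0 ω + max (X 1 ω) (X 2 ω) + X 3 ω = 3 ∧ X 0 ω + X 2 ω = 1} := by
    ext ω; simp [Prod.ext_iff]; tauto
  have e2 : (fun ω => (X 0 ω + X 2 ω, X 2 ω + max (X 0 ω) (X 3 ω) + X 1 ω, X 0 ω + X 1 ω)) ⁻¹'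
      ({((1 : ℝ), (3 : ℝ), (2 : ℝ))} : Set (ℝ × ℝ × ℝ)) =
      {ω | X 0 ω + X 1 ω = 2 ∧ X 2 ω + max (X 0 ω) (X 3 ω) + X 1 ω = 3 ∧ X 0 ω + X 2 ω = 1} := by
    ext ω; simp [Prod.ext_iff]; tauto
  rw [e1, e2, hP1, hP2] at h1
  simp at h1
end

section
/- Let $t$ be a standard Young tableau of staircase shape $\delta_n = (n-1, n-2, \ldots, 1)$ and let $s = \mathrm{EG}(t)$ be its image under the Edelman–Greene correspondence. Then $\mathrm{last}_s(k) = t_{n-k,k}$ for all $1 \le k \le n-1$; that is, the index of the last occurrence of the letter $k$ in the sorting network $s$ equals the entry of $t$ in the corner box $(n-k, k)$. Consequently, the ordering permutations coincide: $\pi_s = \sigma_t$. -/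
/-- The staircase shape `δ_n = (n-1, n-2, …, 1)`: boxes `(i,j)` with `i,j ≥ 1` and
`i + j ≤ n`. -/
def staircase (n : ℕ) : Finset (ℕ × ℕ) :=
  (Finset.Icc (1, 1) (n, n)).filter fun p => p.1 + p.2 ≤ n

/-- A standard Young tableau of staircase shape `δ_n`, encoded as a function
`t : ℕ × ℕ → ℕ` which is `0` outside `δ_n`, fills the boxes of `δ_n` bijectively with
`1, …, N` (`N = n(n-1)/2`), and strictly increases along rows and columns. -/
def IsStaircaseSYT (n : ℕ) (t : ℕ × ℕ → ℕ) : Prop :=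
  (∀ p, p ∉ staircase n → t p = 0) ∧
  (∀ p ∈ staircase n, 1 ≤ t p ∧ t p ≤ n * (n - 1) / 2) ∧
  Set.InjOn t (staircase n) ∧
  (∀ v, 1 ≤ v → v ≤ n * (n - 1) / 2 → ∃ p ∈ staircase n, t p = v) ∧
  (∀ p ∈ staircase n, ∀ q ∈ staircase n, p.1 ≤ q.1 → p.2 ≤ q.2 → p ≠ q → t p < t q)

/-- The box containing the maximal entry `N = n(n-1)/2` of `t` (for an SYT there is
exactly one such box, and `Finset.sup id` extracts it). -/
def maxBox (n : ℕ) (t : ℕ × ℕ → ℕ) : ℕ × ℕ :=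
  ((staircase n).filter fun p => t p = n * (n - 1) / 2).sup id

/-- One step of the evacuation path of `t`: from a box move to the neighbour above or
to the left containing the larger entry (with the convention `t = 0` outside `δ_n`,
in particular on row/column `0`). -/
def evacStep (t : ℕ × ℕ → ℕ) (p : ℕ × ℕ) : ℕ × ℕ :=
  if t (p.1 - 1, p.2) > t (p.1, p.2 - 1) then (p.1 - 1, p.2) else (p.1, p.2 - 1)

open scoped Classical in
/-- The Schützenberger operator `Φ` on staircase tableaux: slide outward along the
evacuation path `c_1 = maxBox, c_{m+1} = evacStep (c_m)` (so `t'_{c_m} = t_{c_{m+1}}`,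
emptying the box `(1,1)`), then increment every entry of the staircase by `1`. -/
noncomputable def schutzenberger (n : ℕ) (t : ℕ × ℕ → ℕ) : ℕ × ℕ → ℕ := fun p =>
  (if ∃ m < n - 1, (evacStep t)^[m] (maxBox n t) = p then t (evacStep t p) else t p)
  + (if p ∈ staircase n then 1 else 0)

/-- `j_max(t)`: the column index of the box of `t` containing the maximal entry. -/
def jmax (n : ℕ) (t : ℕ × ℕ → ℕ) : ℕ :=
  ((staircase n).filter fun p => t p = n * (n - 1) / 2).sup fun p => p.2

/-- The Edelman–Greene word of `t`: `s_m = j_max(Φ^{N-m}(t))` for `1 ≤ m ≤ N`. -/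
noncomputable def EGword (n : ℕ) (t : ℕ × ℕ → ℕ) (m : ℕ) : ℕ :=
  jmax n ((schutzenberger n)^[n * (n - 1) / 2 - m] t)


/-! ### Auxiliary development -/

section EGaux

lemma mem_staircase {n : ℕ} {p : ℕ × ℕ} :
    p ∈ staircase n ↔ 1 ≤ p.1 ∧ 1 ≤ p.2 ∧ p.1 + p.2 ≤ n := by
  simp only [staircase, Finset.mem_filter, Finset.mem_Icc, Prod.le_def]
  omega

lemma N_pos {n : ℕ} (hn : 2 ≤ n) : 1 ≤ n * (n - 1) / 2 := by
  have h : 2 * 1 ≤ n * (n - 1) := Nat.mul_le_mul hn (by omega)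
  omega

variable {n : ℕ} {t : ℕ × ℕ → ℕ}

lemma maxBox_mem (hn : 2 ≤ n) (ht : IsStaircaseSYT n t) :
    maxBox n t ∈ staircase n ∧ t (maxBox n t) = n * (n - 1) / 2 ∧
    (∀ p ∈ staircase n, t p = n * (n - 1) / 2 → p = maxBox n t) ∧
    jmax n t = (maxBox n t).2 := by
  obtain ⟨p0, hp0s, hp0⟩ := ht.2.2.2.1 _ (N_pos hn) le_rfl
  have hfil : (staircase n).filter (fun p => t p = n * (n - 1) / 2) = {p0} := by
    ext q
    simp only [Finset.mem_filter, Finset.mem_singleton]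
    constructor
    · rintro ⟨hq, hqv⟩
      exact ht.2.2.1 (Finset.mem_coe.mpr hq) (Finset.mem_coe.mpr hp0s)
        (hqv.trans hp0.symm)
    · rintro rfl
      exact ⟨hp0s, hp0⟩
  have hmb : maxBox n t = p0 := by
    rw [maxBox, hfil, Finset.sup_singleton]
    rfl
  have hjm : jmax n t = p0.2 := by
    rw [jmax, hfil, Finset.sup_singleton]
  refine ⟨?_, ?_, ?_, ?_⟩
  · rw [hmb]; exact hp0s
  · rw [hmb]; exact hp0
  · intro p hp hpv
    rw [hmb]
    exact ht.2.2.1 (Finset.mem_coe.mpr hp) (Finset.mem_coe.mpr hp0s) (hpv.trans hp0.symm)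
  · rw [hmb, hjm]

lemma t_eq_max_imp (hn : 2 ≤ n) (ht : IsStaircaseSYT n t) {p : ℕ × ℕ}
    (hp : t p = n * (n - 1) / 2) : p = maxBox n t := by
  by_cases hps : p ∈ staircase n
  · exact (maxBox_mem hn ht).2.2.1 p hps hp
  · have := ht.1 p hps
    have := N_pos hn
    omega

lemma max_corner (hn : 2 ≤ n) (ht : IsStaircaseSYT n t) :
    (maxBox n t).1 + (maxBox n t).2 = n := by
  obtain ⟨hs, hv, -, -⟩ := maxBox_mem hn ht
  obtain ⟨h1, h2, h3⟩ := mem_staircase.mp hs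
  by_contra hne
  have hlt : (maxBox n t).1 + (maxBox n t).2 < n := by omega
  set p0 := maxBox n t
  have hq : ((p0.1 + 1, p0.2) : ℕ × ℕ) ∈ staircase n := mem_staircase.mpr (by
    constructor
    · omega
    · exact ⟨h2, by omega⟩)
  have hmono := ht.2.2.2.2 p0 hs (p0.1 + 1, p0.2) hq (by omega) (le_refl _)
    (by intro h; have := congrArg Prod.fst h; simp at this)
  have hb := (ht.2.1 _ hq).2
  omega

/-- The evacuation path. -/
def chainBox (n : ℕ) (t : ℕ × ℕ → ℕ) (m : ℕ) : ℕ × ℕ :=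
  (evacStep t)^[m] (maxBox n t)

lemma chainBox_succ (m : ℕ) : chainBox n t (m + 1) = evacStep t (chainBox n t m) :=
  Function.iterate_succ_apply' _ _ _

lemma evacStep_le (t : ℕ × ℕ → ℕ) (p : ℕ × ℕ) : evacStep t p ≤ p := by
  unfold evacStep
  split
  · exact Prod.le_def.mpr ⟨Nat.sub_le _ _, le_rfl⟩
  · exact Prod.le_def.mpr ⟨le_rfl, Nat.sub_le _ _⟩

lemma evacStep_staircase (ht : IsStaircaseSYT n t) {p : ℕ × ℕ}
    (hp : p ∈ staircase n) (h3 : 3 ≤ p.1 + p.2) :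
    evacStep t p ∈ staircase n ∧ (evacStep t p).1 + (evacStep t p).2 + 1 = p.1 + p.2 := by
  obtain ⟨ha, hb, hab⟩ := mem_staircase.mp hp
  unfold evacStep
  by_cases hgt : t (p.1 - 1, p.2) > t (p.1, p.2 - 1)
  · rw [if_pos hgt]
    have ha2 : 2 ≤ p.1 := by
      by_contra hc
      have ha1 : p.1 = 1 := by omega
      have h0 : t (p.1 - 1, p.2) = 0 := by
        apply ht.1
        simp only [mem_staircase, not_and]
        intro h
        omega
      have h1 : (1 ≤ t (p.1, p.2 - 1)) := by
        apply (ht.2.1 _ _).1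
        exact mem_staircase.mpr ⟨by omega, by omega, by omega⟩
      omega
    exact ⟨mem_staircase.mpr ⟨by omega, hb, by omega⟩, by simp; omega⟩
  · rw [if_neg hgt]
    have hb2 : 2 ≤ p.2 := by
      by_contra hc
      have hb1 : p.2 = 1 := by omega
      have h0 : t (p.1, p.2 - 1) = 0 := by
        apply ht.1
        simp only [mem_staircase, not_and]
        intro h
        omega
      have h1 : (1 ≤ t (p.1 - 1, p.2)) := by
        apply (ht.2.1 _ _).1
        exact mem_staircase.mpr ⟨by omega, by omega, by omega⟩
      omega
    exact ⟨mem_staircase.mpr ⟨ha, by omega, by omega⟩, by simp; omega⟩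

lemma chain_spec (hn : 2 ≤ n) (ht : IsStaircaseSYT n t) :
    ∀ m, m + 2 ≤ n → chainBox n t m ∈ staircase n ∧
      (chainBox n t m).1 + (chainBox n t m).2 = n - m := by
  intro m
  induction m with
  | zero =>
    intro _
    refine ⟨(maxBox_mem hn ht).1, ?_⟩
    have := max_corner hn ht
    simpa [chainBox] using this
  | succ m ih =>
    intro h
    obtain ⟨hs, hsum⟩ := ih (by omega)
    have h3 : 3 ≤ (chainBox n t m).1 + (chainBox n t m).2 := by omega
    obtain ⟨hs', he⟩ := evacStep_staircase ht hs h3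
    rw [chainBox_succ]
    exact ⟨hs', by omega⟩

lemma chain_n2 (hn : 2 ≤ n) (ht : IsStaircaseSYT n t) :
    chainBox n t (n - 2) = (1, 1) := by
  obtain ⟨hs, hsum⟩ := chain_spec hn ht (n - 2) (by omega)
  obtain ⟨h1, h2, h3⟩ := mem_staircase.mp hs
  have e1 : (chainBox n t (n - 2)).1 = 1 := by omega
  have e2 : (chainBox n t (n - 2)).2 = 1 := by omega
  exact Prod.ext e1 e2

lemma chain_n1 (hn : 2 ≤ n) (ht : IsStaircaseSYT n t) :
    chainBox n t (n - 1) = (1, 0) := by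
  have h : n - 1 = (n - 2) + 1 := by omega
  rw [h, chainBox_succ, chain_n2 hn ht]
  have h01 : t (0, 1) = 0 := ht.1 _ (by simp [mem_staircase])
  have h10 : t (1, 0) = 0 := ht.1 _ (by simp [mem_staircase])
  unfold evacStep
  simp [h01, h10]

lemma chain_t_lt (hn : 2 ≤ n) (ht : IsStaircaseSYT n t) :
    ∀ m, m ≤ n - 2 → t (chainBox n t (m + 1)) < t (chainBox n t m) := by
  intro m hm
  by_cases h : m + 1 ≤ n - 2
  · obtain ⟨hs1, hsum1⟩ := chain_spec hn ht m (by omega)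
    obtain ⟨hs2, hsum2⟩ := chain_spec hn ht (m + 1) (by omega)
    have hle : chainBox n t (m + 1) ≤ chainBox n t m := by
      rw [chainBox_succ]; exact evacStep_le t _
    obtain ⟨hle1, hle2⟩ := Prod.le_def.mp hle
    refine ht.2.2.2.2 _ hs2 _ hs1 hle1 hle2 ?_
    intro heq
    rw [heq] at hsum2
    omega
  · have hm' : m = n - 2 := by omega
    subst hm'
    rw [show n - 2 + 1 = n - 1 by omega, chain_n1 hn ht, chain_n2 hn ht]
    have h10 : t (1, 0) = 0 := ht.1 _ (by simp [mem_staircase])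
    have h11 : 1 ≤ t (1, 1) := (ht.2.1 _ (mem_staircase.mpr ⟨le_rfl, le_rfl, by omega⟩)).1
    omega

lemma chain_t_lt' (hn : 2 ≤ n) (ht : IsStaircaseSYT n t) :
    ∀ m m', m < m' → m' ≤ n - 1 → t (chainBox n t m') < t (chainBox n t m) := by
  intro m m' h hle
  induction m' with
  | zero => omega
  | succ m' ih =>
    have hstep : t (chainBox n t (m' + 1)) < t (chainBox n t m') :=
      chain_t_lt hn ht m' (by omega)
    rcases Nat.lt_succ_iff_lt_or_eq.mp h with h' | h'
    · exact hstep.trans (ih h' (by omega))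
    · rw [h']; exact hstep

lemma schutz_apply_off {p : ℕ × ℕ} (hp : p ∈ staircase n)
    (hoff : ¬ ∃ m < n - 1, chainBox n t m = p) :
    schutzenberger n t p = t p + 1 := by
  simp only [chainBox] at hoff
  unfold schutzenberger
  rw [if_neg hoff, if_pos hp]

lemma schutz_apply_on (hn : 2 ≤ n) (ht : IsStaircaseSYT n t) {m : ℕ} (hm : m < n - 1) :
    schutzenberger n t (chainBox n t m) = t (chainBox n t (m + 1)) + 1 := by
  have hs := (chain_spec hn ht m (by omega)).1
  unfold schutzenberger
  rw [if_pos ⟨m, hm, rfl⟩, if_pos hs, ← chainBox_succ]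

lemma schutz_syt (hn : 2 ≤ n) (ht : IsStaircaseSYT n t) :
    IsStaircaseSYT n (schutzenberger n t) := by
  have hNpos := N_pos (n := n) hn
  have h0 := ht.1
  have hbd := ht.2.1
  have hinj := ht.2.2.1
  have hsurj := ht.2.2.2.1
  have hmono := ht.2.2.2.2
  refine ⟨?_, ?_, ?_, ?_, ?_⟩
  -- (1) zero outside the staircase
  · intro p hp
    have hA : ¬ ∃ m < n - 1, chainBox n t m = p := by
      rintro ⟨m, hm, rfl⟩
      exact hp (chain_spec hn ht m (by omega)).1
    simp only [chainBox] at hA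
    unfold schutzenberger
    rw [if_neg hA, if_neg hp, add_zero]
    exact h0 p hp
  -- (2) bounds
  · intro p hp
    by_cases hA : ∃ m < n - 1, chainBox n t m = p
    · obtain ⟨m, hm, rfl⟩ := hA
      rw [schutz_apply_on hn ht hm]
      have h1 := chain_t_lt hn ht m (by omega)
      have h2 := (hbd _ (chain_spec hn ht m (by omega)).1).2
      omega
    · rw [schutz_apply_off hp hA]
      have hlt : t p < n * (n - 1) / 2 := by
        rcases lt_or_eq_of_le (hbd p hp).2 with h | h
        · exact h
        · exact absurd ⟨0, by omega, (t_eq_max_imp hn ht h).symm⟩ hA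
      omega
  -- (3) injective
  · intro p hp q hq heq
    have hp' : p ∈ staircase n := Finset.mem_coe.mp hp
    have hq' : q ∈ staircase n := Finset.mem_coe.mp hq
    by_cases hAp : ∃ m < n - 1, chainBox n t m = p
    · obtain ⟨m, hm, rfl⟩ := hAp
      by_cases hAq : ∃ m' < n - 1, chainBox n t m' = q
      · obtain ⟨m', hm', rfl⟩ := hAq
        rw [schutz_apply_on hn ht hm, schutz_apply_on hn ht hm'] at heq
        rcases Nat.lt_trichotomy m m' with h | h | h
        · have := chain_t_lt' hn ht (m + 1) (m' + 1) (by omega) (by omega)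
          omega
        · rw [h]
        · have := chain_t_lt' hn ht (m' + 1) (m + 1) (by omega) (by omega)
          omega
      · rw [schutz_apply_on hn ht hm, schutz_apply_off hq' hAq] at heq
        exfalso
        by_cases hm2 : m + 1 ≤ n - 2
        · have hs := (chain_spec hn ht (m + 1) (by omega)).1
          have : chainBox n t (m + 1) = q :=
            hinj (Finset.mem_coe.mpr hs) hq (by omega)
          exact hAq ⟨m + 1, by omega, this⟩
        · have hm'' : m = n - 2 := by omega
          rw [hm'', show n - 2 + 1 = n - 1 by omega, chain_n1 hn ht] at heq
          have h10 : t (1, 0) = 0 := h0 _ (by simp [mem_staircase])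
          have := (hbd q hq').1
          omega
    · by_cases hAq : ∃ m' < n - 1, chainBox n t m' = q
      · obtain ⟨m', hm', rfl⟩ := hAq
        rw [schutz_apply_off hp' hAp, schutz_apply_on hn ht hm'] at heq
        exfalso
        by_cases hm2 : m' + 1 ≤ n - 2
        · have hs := (chain_spec hn ht (m' + 1) (by omega)).1
          have : p = chainBox n t (m' + 1) :=
            hinj hp (Finset.mem_coe.mpr hs) (by omega)
          exact hAp ⟨m' + 1, by omega, this.symm⟩
        · have hm'' : m' = n - 2 := by omega
          rw [hm'', show n - 2 + 1 = n - 1 by omega, chain_n1 hn ht] at heq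
          have h10 : t (1, 0) = 0 := h0 _ (by simp [mem_staircase])
          have := (hbd p hp').1
          omega
      · rw [schutz_apply_off hp' hAp, schutz_apply_off hq' hAq] at heq
        exact hinj hp hq (by omega)
  -- (4) surjective
  · intro v hv1 hv2
    by_cases hv : v = 1
    · subst hv
      refine ⟨(1, 1), mem_staircase.mpr ⟨le_rfl, le_rfl, by omega⟩, ?_⟩
      have h11 : ((1, 1) : ℕ × ℕ) = chainBox n t (n - 2) := (chain_n2 hn ht).symm
      rw [h11, schutz_apply_on hn ht (by omega), show n - 2 + 1 = n - 1 by omega,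
        chain_n1 hn ht, h0 (1, 0) (by simp [mem_staircase])]
    · obtain ⟨q, hq, hqv⟩ := hsurj (v - 1) (by omega) (by omega)
      by_cases hB : ∃ m < n - 1, chainBox n t m = q
      · obtain ⟨m, hm, rfl⟩ := hB
        have hm0 : m ≠ 0 := by
          intro h
          rw [h] at hqv
          have hc0 : t (chainBox n t 0) = n * (n - 1) / 2 := (maxBox_mem hn ht).2.1
          omega
        refine ⟨chainBox n t (m - 1), (chain_spec hn ht (m - 1) (by omega)).1, ?_⟩
        rw [schutz_apply_on hn ht (show m - 1 < n - 1 by omega),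
          show m - 1 + 1 = m by omega, hqv]
        omega
      · exact ⟨q, hq, by rw [schutz_apply_off hq hB, hqv]; omega⟩
  -- (5) strictly increasing
  · intro p hp q hq h1 h2 hne
    by_cases hBq : ∃ m < n - 1, chainBox n t m = q
    · obtain ⟨m, hm, rfl⟩ := hBq
      rw [schutz_apply_on hn ht hm]
      obtain ⟨hqs, hqsum⟩ := chain_spec hn ht m (by omega)
      obtain ⟨hq1, hq2, hq3⟩ := mem_staircase.mp hqs
      obtain ⟨hp1, hp2, hp3⟩ := mem_staircase.mp hp
      by_cases hBp : ∃ j < n - 1, chainBox n t j = p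
      · obtain ⟨j, hj, rfl⟩ := hBp
        rw [schutz_apply_on hn ht hj]
        have hjsum := (chain_spec hn ht j (by omega)).2
        have hmj : m < j := by
          have hne2 : (chainBox n t j).1 ≠ (chainBox n t m).1 ∨
              (chainBox n t j).2 ≠ (chainBox n t m).2 := by
            by_contra hc
            push_neg at hc
            exact hne (Prod.ext hc.1 hc.2)
          omega
        have := chain_t_lt' hn ht (m + 1) (j + 1) (by omega) (by omega)
        omega
      · rw [schutz_apply_off hp hBp]
        by_cases hgt : t ((chainBox n t m).1 - 1, (chainBox n t m).2) >
            t ((chainBox n t m).1, (chainBox n t m).2 - 1)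
        · have hnext : chainBox n t (m + 1) =
              ((chainBox n t m).1 - 1, (chainBox n t m).2) := by
            rw [chainBox_succ]
            unfold evacStep
            rw [if_pos hgt]
          rw [hnext]
          by_cases hple : p.1 ≤ (chainBox n t m).1 - 1
          · have hstair : ((chainBox n t m).1 - 1, (chainBox n t m).2) ∈ staircase n :=
              mem_staircase.mpr ⟨by omega, hq2, by omega⟩
            have hpne : p ≠ ((chainBox n t m).1 - 1, (chainBox n t m).2) := by
              intro hpe
              have hm2 : m + 1 ≤ n - 2 := by
                by_contra hc
                have hmm : m = n - 2 := by omega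
                subst hmm
                rw [show n - 2 + 1 = n - 1 by omega, chain_n1 hn ht] at hnext
                rw [hpe, ← hnext] at hp
                simp [mem_staircase] at hp
              exact hBp ⟨m + 1, by omega, by rw [hnext, ← hpe]⟩
            have := hmono p hp _ hstair hple h2 hpne
            omega
          · have hp1a : p.1 = (chainBox n t m).1 := by omega
            have hp2b : p.2 < (chainBox n t m).2 := by
              rcases lt_or_eq_of_le h2 with h | h
              · exact h
              · exact absurd (Prod.ext hp1a h) hne
            have hb' : ((chainBox n t m).1, (chainBox n t m).2 - 1) ∈ staircase n :=
              mem_staircase.mpr ⟨hq1, by omega, by omega⟩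
            have hle' : t p ≤ t ((chainBox n t m).1, (chainBox n t m).2 - 1) := by
              by_cases hpe : p = ((chainBox n t m).1, (chainBox n t m).2 - 1)
              · rw [hpe]
              · exact le_of_lt (hmono p hp _ hb' (by omega) (by omega) hpe)
            omega
        · have hnext : chainBox n t (m + 1) =
              ((chainBox n t m).1, (chainBox n t m).2 - 1) := by
            rw [chainBox_succ]
            unfold evacStep
            rw [if_neg hgt]
          rw [hnext]
          by_cases hple : p.2 ≤ (chainBox n t m).2 - 1
          · have hstair : ((chainBox n t m).1, (chainBox n t m).2 - 1) ∈ staircase n :=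
              mem_staircase.mpr ⟨hq1, by omega, by omega⟩
            have hpne : p ≠ ((chainBox n t m).1, (chainBox n t m).2 - 1) := by
              intro hpe
              have hm2 : m + 1 ≤ n - 2 := by
                by_contra hc
                have hmm : m = n - 2 := by omega
                subst hmm
                rw [show n - 2 + 1 = n - 1 by omega, chain_n1 hn ht] at hnext
                rw [hpe, ← hnext] at hp
                simp [mem_staircase] at hp
              exact hBp ⟨m + 1, by omega, by rw [hnext, ← hpe]⟩
            have := hmono p hp _ hstair h1 hple hpne
            omega
          · have hp2b : p.2 = (chainBox n t m).2 := by omega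
            have hp1a : p.1 < (chainBox n t m).1 := by
              rcases lt_or_eq_of_le h1 with h | h
              · exact h
              · exact absurd (Prod.ext h hp2b) hne
            have ha' : ((chainBox n t m).1 - 1, (chainBox n t m).2) ∈ staircase n :=
              mem_staircase.mpr ⟨by omega, hq2, by omega⟩
            push_neg at hgt
            by_cases hpe : p = ((chainBox n t m).1 - 1, (chainBox n t m).2)
            · have hb2 : 2 ≤ (chainBox n t m).2 := by
                by_contra hc
                have hb1 : (chainBox n t m).2 = 1 := by omega
                have h00 : t ((chainBox n t m).1, (chainBox n t m).2 - 1) = 0 := by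
                  apply h0
                  simp only [mem_staircase, not_and]
                  intro _
                  omega
                have hp1' := (hbd p hp).1
                rw [hpe] at hp1'
                omega
              have hb' : ((chainBox n t m).1, (chainBox n t m).2 - 1) ∈ staircase n :=
                mem_staircase.mpr ⟨hq1, by omega, by omega⟩
              have hnee : t ((chainBox n t m).1 - 1, (chainBox n t m).2) ≠
                  t ((chainBox n t m).1, (chainBox n t m).2 - 1) := by
                intro hcc
                have heq2 := hinj (Finset.mem_coe.mpr ha') (Finset.mem_coe.mpr hb') hcc
                have h1c := congrArg Prod.fst heq2
                simp only [Prod.fst] at h1c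
                omega
              have hpv : t p = t ((chainBox n t m).1 - 1, (chainBox n t m).2) := by
                rw [hpe]
              omega
            · have := hmono p hp _ ha' (by omega) (by omega) hpe
              omega
    · rw [schutz_apply_off hq hBq]
      by_cases hBp : ∃ j < n - 1, chainBox n t j = p
      · obtain ⟨j, hj, rfl⟩ := hBp
        rw [schutz_apply_on hn ht hj]
        by_cases hj2 : j + 1 ≤ n - 2
        · have hs := (chain_spec hn ht (j + 1) (by omega)).1
          have hle : chainBox n t (j + 1) ≤ chainBox n t j := by
            rw [chainBox_succ]
            exact evacStep_le t _
          obtain ⟨hle1, hle2⟩ := Prod.le_def.mp hle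
          have hne' : chainBox n t (j + 1) ≠ q := fun h => hBq ⟨j + 1, by omega, h⟩
          have := hmono _ hs _ hq (le_trans hle1 h1) (le_trans hle2 h2) hne'
          omega
        · have hjj : j = n - 2 := by omega
          rw [hjj, show n - 2 + 1 = n - 1 by omega, chain_n1 hn ht]
          have h10 : t (1, 0) = 0 := h0 _ (by simp [mem_staircase])
          have := (hbd q hq).1
          omega
      · rw [schutz_apply_off hp hBp]
        have := hmono p hp q hq h1 h2 hne
        omega

lemma jmax_eq_iff (hn : 2 ≤ n) (ht : IsStaircaseSYT n t) {k : ℕ}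
    (hk1 : 1 ≤ k) (hk2 : k ≤ n - 1) :
    jmax n t = k ↔ t (n - k, k) = n * (n - 1) / 2 := by
  obtain ⟨hs, hv, huniq, hjm⟩ := maxBox_mem hn ht
  have hc := max_corner hn ht
  obtain ⟨ha, hb, hab⟩ := mem_staircase.mp hs
  constructor
  · intro h
    rw [hjm] at h
    have h1 : (maxBox n t).1 = n - k := by omega
    have hmb : maxBox n t = (n - k, k) := Prod.ext h1 h
    rw [← hmb]
    exact hv
  · intro h
    have hmem : ((n - k, k) : ℕ × ℕ) ∈ staircase n :=
      mem_staircase.mpr ⟨by omega, hk1, by omega⟩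
    have := huniq _ hmem h
    rw [hjm, ← this]

lemma corner_step (hn : 2 ≤ n) (ht : IsStaircaseSYT n t) {k : ℕ}
    (hk1 : 1 ≤ k) (hk2 : k ≤ n - 1) (hlt : t (n - k, k) < n * (n - 1) / 2) :
    schutzenberger n t (n - k, k) = t (n - k, k) + 1 := by
  have hmem : ((n - k, k) : ℕ × ℕ) ∈ staircase n :=
    mem_staircase.mpr ⟨by omega, hk1, by omega⟩
  apply schutz_apply_off hmem
  rintro ⟨m, hm, hcm⟩
  match m with
  | 0 =>
    have hv : t (chainBox n t 0) = n * (n - 1) / 2 := (maxBox_mem hn ht).2.1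
    rw [hcm] at hv
    omega
  | m + 1 =>
    have hsum := (chain_spec hn ht (m + 1) (by omega)).2
    rw [hcm] at hsum
    simp only [Prod.fst, Prod.snd] at hsum
    omega

lemma iter_syt (hn : 2 ≤ n) (ht : IsStaircaseSYT n t) :
    ∀ r, IsStaircaseSYT n ((schutzenberger n)^[r] t) := by
  intro r
  induction r with
  | zero => exact ht
  | succ r ih =>
    rw [Function.iterate_succ_apply']
    exact schutz_syt hn ih

lemma corner_iter (hn : 2 ≤ n) (ht : IsStaircaseSYT n t) {k : ℕ}
    (hk1 : 1 ≤ k) (hk2 : k ≤ n - 1) :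
    ∀ r, r ≤ n * (n - 1) / 2 - t (n - k, k) →
      ((schutzenberger n)^[r] t) (n - k, k) = t (n - k, k) + r := by
  intro r
  induction r with
  | zero => simp
  | succ r ih =>
    intro hr
    have h1 := ih (by omega)
    have hmem : ((n - k, k) : ℕ × ℕ) ∈ staircase n :=
      mem_staircase.mpr ⟨by omega, hk1, by omega⟩
    have hKb := ht.2.1 _ hmem
    rw [Function.iterate_succ_apply',
      corner_step hn (iter_syt hn ht r) hk1 hk2 (by rw [h1]; omega), h1]
    omega

end EGaux

/-- for a staircase standard Young tableau `t` and its Edelman–Greene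
sorting network `s = EG(t)`, the last occurrence of the letter `k` in `s` is at
position `t_{n-k,k}`, i.e. `last_s(k) = t_{n-k,k}` for `1 ≤ k ≤ n-1`; consequently the
ordering permutations coincide: the relative order of `(last_s(1),…,last_s(n-1))`
equals that of the corner entries `(t_{n-1,1},…,t_{1,n-1})`, i.e. `π_s = σ_t`. -/
theorem edelmanGreene_last_eq_corner (n : ℕ) (hn : 2 ≤ n)
    (t : ℕ × ℕ → ℕ) (ht : IsStaircaseSYT n t) :
    (∀ k, 1 ≤ k → k ≤ n - 1 →
      IsGreatest {j : ℕ | 1 ≤ j ∧ j ≤ n * (n - 1) / 2 ∧ EGword n t j = k}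
        (t (n - k, k))) ∧
    (∀ k l, 1 ≤ k → k ≤ n - 1 → 1 ≤ l → l ≤ n - 1 →
      (sSup {j : ℕ | 1 ≤ j ∧ j ≤ n * (n - 1) / 2 ∧ EGword n t j = k} <
          sSup {j : ℕ | 1 ≤ j ∧ j ≤ n * (n - 1) / 2 ∧ EGword n t j = l} ↔
        t (n - k, k) < t (n - l, l))) := by
  have key : ∀ k, 1 ≤ k → k ≤ n - 1 →
      IsGreatest {j : ℕ | 1 ≤ j ∧ j ≤ n * (n - 1) / 2 ∧ EGword n t j = k}
        (t (n - k, k)) := by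
    intro k hk1 hk2
    have hmem : ((n - k, k) : ℕ × ℕ) ∈ staircase n :=
      mem_staircase.mpr ⟨by omega, hk1, by omega⟩
    have hKb := ht.2.1 _ hmem
    constructor
    · refine ⟨hKb.1, hKb.2, ?_⟩
      have hval := corner_iter hn ht hk1 hk2 (n * (n - 1) / 2 - t (n - k, k)) le_rfl
      unfold EGword
      exact (jmax_eq_iff hn (iter_syt hn ht _) hk1 hk2).mpr (by rw [hval]; omega)
    · rintro m ⟨hm1, hm2, hm3⟩
      by_contra hgt
      push_neg at hgt
      unfold EGword at hm3
      have hval := corner_iter hn ht hk1 hk2 (n * (n - 1) / 2 - m) (by omega)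
      have hN := (jmax_eq_iff hn (iter_syt hn ht _) hk1 hk2).mp hm3
      omega
  refine ⟨key, ?_⟩
  intro k l hk1 hk2 hl1 hl2
  rw [(key k hk1 hk2).csSup_eq, (key l hl1 hl2).csSup_eq]
end

section
/- The number of standard Young tableaux of staircase shape $\delta_n = (n-1, n-2, \ldots, 1)$ equals $N! / (1^{n-1} \cdot 3^{n-2} \cdot 5^{n-3} \cdots (2n-3)^1)$ where $N = n(n-1)/2$. -/
open Polynomial


noncomputable def ifac (a : ℤ) : ℚ := if 0 ≤ a then ((a.toNat).factorial : ℚ)⁻¹ else 0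

lemma ifac_neg {a : ℤ} (h : a < 0) : ifac a = 0 := by simp [ifac, not_le.2 h]

lemma ifac_natCast (k : ℕ) : ifac (k : ℤ) = ((k.factorial : ℚ))⁻¹ := by simp [ifac]

lemma ifac_sub_one (a : ℤ) : ifac (a - 1) = a * ifac a := by
  rcases lt_trichotomy a 0 with h | h | h
  · rw [ifac_neg h, ifac_neg (by omega), mul_zero]
  · subst h; simp [ifac_neg, ifac]
  · have h1 : (0:ℤ) ≤ a - 1 := by omega
    have h0 : (0:ℤ) ≤ a := by omega
    rw [ifac, ifac, if_pos h1, if_pos h0]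
    have : a.toNat = (a-1).toNat + 1 := by omega
    rw [this, Nat.factorial_succ]
    have hfac : ((a - 1).toNat.factorial : ℚ) ≠ 0 := Nat.cast_ne_zero.2 (a-1).toNat.factorial_pos.ne'
    have ha : (((a-1).toNat : ℚ) + 1) = (a : ℚ) := by
      have h2 : ((a-1).toNat : ℤ) = a - 1 := Int.toNat_of_nonneg h1
      have h3 : ((a-1).toNat : ℚ) = ((a:ℚ) - 1) := by exact_mod_cast congrArg (fun z : ℤ => (z : ℚ)) h2
      rw [h3]; ring
    push_cast
    rw [mul_inv, ha]
    have haq : (a:ℚ) ≠ 0 := by exact_mod_cast h.ne'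
    field_simp

lemma ifac_zero : ifac 0 = 1 := by simp [ifac]

noncomputable def Mdet (m : ℕ) (μ : Fin m → ℤ) : ℚ :=
  Matrix.det (Matrix.of fun i j : Fin m => ifac (μ i - (i : ℤ) + (j : ℤ)))

lemma sum_Mdet (m : ℕ) (μ : Fin m → ℤ) :
    ∑ i : Fin m, Mdet m (Function.update μ i (μ i - 1)) = (∑ i, μ i) * Mdet m μ := by
  classical
  simp only [Mdet, Matrix.det_apply]
  rw [Finset.sum_comm, Finset.mul_sum]
  refine Finset.sum_congr rfl fun σ _ => ?_
  set g : Fin m → ℚ := fun i => ifac (μ (σ i) - ((σ i : ℕ) : ℤ) + (i : ℤ)) with hg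
  set c : Fin m → ℚ := fun k => ((μ (σ k) : ℚ) - ((σ k : ℕ) : ℚ) + ((k : ℕ) : ℚ)) with hc
  have hrow : ∀ k : Fin m,
      (∏ i : Fin m, Matrix.of (fun i j => ifac (Function.update μ (σ k) (μ (σ k) - 1) i - (i:ℤ) + (j:ℤ))) (σ i) i)
        = c k * ∏ i, g i := by
    intro k
    have hprod : ∀ i : Fin m,
        Matrix.of (fun i j => ifac (Function.update μ (σ k) (μ (σ k) - 1) i - (i:ℤ) + (j:ℤ))) (σ i) i
          = Function.update g k (c k * g k) i := by
      intro i
      by_cases hik : i = k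
      · subst hik
        simp only [Matrix.of_apply, Function.update_self]
        have : μ (σ i) - 1 - ((σ i : ℕ) : ℤ) + (i : ℤ) = (μ (σ i) - ((σ i : ℕ) : ℤ) + (i : ℤ)) - 1 := by ring
        rw [this, ifac_sub_one]
        simp only [hg, hc]
        push_cast
        ring
      · have hσ : σ i ≠ σ k := fun h => hik (σ.injective h)
        simp only [Matrix.of_apply, Function.update_of_ne hσ, Function.update_of_ne hik, hg]
    rw [Finset.prod_congr rfl (fun i _ => hprod i)]
    rw [Finset.prod_update_of_mem (Finset.mem_univ k)]
    rw [mul_assoc, ← Finset.mul_prod_erase Finset.univ g (Finset.mem_univ k)]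
    congr 1
    simp [Finset.sdiff_singleton_eq_erase]
  calc ∑ x : Fin m, (Equiv.Perm.sign σ : ℤ) •
          ∏ i : Fin m, Matrix.of (fun i j => ifac (Function.update μ x (μ x - 1) i - (i:ℤ) + (j:ℤ))) (σ i) i
      = ∑ k : Fin m, (Equiv.Perm.sign σ : ℤ) •
          ∏ i : Fin m, Matrix.of (fun i j => ifac (Function.update μ (σ k) (μ (σ k) - 1) i - (i:ℤ) + (j:ℤ))) (σ i) i := by
        exact (Equiv.sum_comp σ _).symm
    _ = ∑ k : Fin m, (Equiv.Perm.sign σ : ℤ) • (c k * ∏ i, g i) := by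
        refine Finset.sum_congr rfl fun k _ => ?_; rw [hrow k]
    _ = (∑ k, c k) * ((Equiv.Perm.sign σ : ℤ) • ∏ i, g i) := by
        rw [Finset.sum_mul]
        refine Finset.sum_congr rfl fun k _ => ?_
        rw [zsmul_eq_mul, zsmul_eq_mul]; ring
    _ = ((∑ i, μ i : ℤ) : ℚ) * ((Equiv.Perm.sign σ : ℤ) • ∏ i, g i) := by
        congr 1
        have h1 : ∑ k : Fin m, c k = ∑ k : Fin m, ((μ (σ k) : ℚ)) - ∑ k : Fin m, ((σ k : ℕ) : ℚ) + ∑ k : Fin m, ((k : ℕ) : ℚ) := by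
          simp [hc, Finset.sum_add_distrib, Finset.sum_sub_distrib]
        have h2 : ∑ k : Fin m, ((μ (σ k) : ℚ)) = ∑ k : Fin m, ((μ k : ℚ)) := Equiv.sum_comp σ (fun k => ((μ k : ℚ)))
        have h3 : ∑ k : Fin m, ((σ k : ℕ) : ℚ) = ∑ k : Fin m, ((k : ℕ) : ℚ) := Equiv.sum_comp σ (fun k : Fin m => ((k : ℕ) : ℚ))
        rw [h1, h2, h3]
        push_cast
        ring
    _ = ((∑ i, μ i : ℤ) : ℚ) * ((Equiv.Perm.sign σ : ℤ) • ∏ i : Fin m, Matrix.of (fun i j => ifac (μ i - (i:ℤ) + (j:ℤ))) (σ i) i) := rfl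

lemma Mdet_eq_zero_of_eq (m : ℕ) (μ : Fin m → ℤ) {i j : Fin m} (hij : i ≠ j)
    (h : μ i - (i : ℤ) = μ j - (j : ℤ)) : Mdet m μ = 0 := by
  apply Matrix.det_zero_of_row_eq hij
  funext k
  simp only [Matrix.of_apply]
  rw [show μ i - (i:ℤ) + (k:ℤ) = μ j - (j:ℤ) + (k:ℤ) by rw [h]]

lemma Mdet_eq_zero_of_neg (m : ℕ) (μ : Fin m → ℤ) {i : Fin m}
    (h : μ i - (i : ℤ) + (m - 1 : ℤ) < 0) : Mdet m μ = 0 := by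
  apply Matrix.det_eq_zero_of_row_eq_zero i
  intro j
  simp only [Matrix.of_apply]
  apply ifac_neg
  have : (j : ℤ) ≤ (m : ℤ) - 1 := by
    have := j.isLt; omega
  omega

lemma Mdet_zero (m : ℕ) : Mdet m (fun _ => 0) = 1 := by
  rw [Mdet]
  rw [Matrix.det_of_upperTriangular]
  · apply Finset.prod_eq_one
    intro i _
    show ifac (0 - (i:ℤ) + (i:ℤ)) = 1
    rw [show (0:ℤ) - (i:ℤ) + (i:ℤ) = 0 by ring, ifac_zero]
  · intro i j hji
    show ifac (0 - (i:ℤ) + (j:ℤ)) = 0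
    apply ifac_neg
    have : (j:ℤ) < (i:ℤ) := by exact_mod_cast hji
    omega

lemma fac_mul_ifac (k : ℕ) : ∀ (y : ℤ), 0 ≤ y + k →
    (((y + k).toNat).factorial : ℚ) * ifac y = ∏ t ∈ Finset.range k, ((y + t + 1 : ℤ) : ℚ) := by
  induction k with
  | zero =>
    intro y hy
    simp only [Nat.cast_zero, add_zero] at hy ⊢
    rw [Finset.prod_range_zero, ifac, if_pos hy]
    rw [mul_inv_cancel₀]
    exact Nat.cast_ne_zero.2 (Nat.factorial_pos _).ne'
  | succ k ih =>
    intro y hy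
    rw [Finset.prod_range_succ]
    by_cases h : 0 ≤ y + k
    · have htn : ((y + k).toNat : ℤ) = y + k := Int.toNat_of_nonneg h
      have h1 : (y + ((k:ℕ)+1 : ℕ)).toNat = (y + k).toNat + 1 := by push_cast; omega
      have htnq : (((y + k).toNat : ℕ) : ℚ) = (y:ℚ) + k := by
        exact_mod_cast congrArg (fun z : ℤ => (z:ℚ)) htn
      calc (((y + ((k:ℕ)+1:ℕ)).toNat).factorial : ℚ) * ifac y
          = ((((y+k).toNat : ℕ) : ℚ) + 1) * ((((y + k).toNat).factorial : ℚ) * ifac y) := by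
            rw [h1, Nat.factorial_succ]; push_cast; ring
        _ = ((y + (k:ℕ) + 1 : ℤ) : ℚ) * ∏ t ∈ Finset.range k, ((y + t + 1 : ℤ):ℚ) := by
            rw [ih y h]; congr 1; rw [htnq]; push_cast; ring
        _ = _ := by push_cast; ring
    · have hz : ((y + (k:ℕ) + 1 : ℤ) : ℚ) = 0 := by
        have : y + (k:ℕ) + 1 = 0 := by push_cast at hy ⊢; omega
        exact_mod_cast congrArg (fun z : ℤ => (z:ℚ)) this
      rw [hz, mul_zero, ifac_neg (by push_cast at h ⊢; omega), mul_zero]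

lemma prod_two_mul_succ (j : ℕ) : ∏ t ∈ Finset.range j, (2*t+2) = 2^j * j.factorial := by
  induction j with
  | zero => simp
  | succ j ih => rw [Finset.prod_range_succ, ih, Nat.factorial_succ, pow_succ]; ring

lemma Mdet_staircase (m : ℕ) :
    Mdet m (fun i => (m : ℤ) - i) * ∏ j ∈ Finset.range m, ((2*j+1).factorial : ℚ)
      = ∏ j ∈ Finset.range m, ((2^j * j.factorial : ℕ) : ℚ) := by
  classical
  set v : Fin m → ℚ := fun i => 2*(i:ℚ) + 2 - m with hv
  set p : Fin m → ℚ[X] := fun j =>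
    ∏ t ∈ Finset.range (j:ℕ), (Polynomial.X + Polynomial.C ((m:ℚ) - (j:ℕ) + t)) with hp
  have h_monic : ∀ j, (p j).Monic := fun j =>
    Polynomial.monic_prod_of_monic _ _ fun t _ => Polynomial.monic_X_add_C _
  have h_deg : ∀ j : Fin m, (p j).natDegree = (j:ℕ) := by
    intro j
    rw [hp]
    simp only
    rw [Polynomial.natDegree_prod _ _ fun t _ => (Polynomial.monic_X_add_C _).ne_zero]
    simp only [Polynomial.natDegree_X_add_C, Finset.sum_const, Finset.card_range, smul_eq_mul,
      mul_one]
  have hentry : ∀ i j : Fin m, (p j).eval (v i)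
      = (((2*(i:ℕ)+1).factorial : ℚ)) * ifac (2*(i:ℕ) + 1 - (j:ℕ)) := by
    intro i j
    have key := fac_mul_ifac (j:ℕ) (2*(i:ℕ) + 1 - (j:ℕ)) (by push_cast; omega)
    have harg : ((2*(i:ℕ) + 1 - (j:ℕ) : ℤ) + ((j:ℕ):ℤ)) = ((2*(i:ℕ)+1 : ℕ) : ℤ) := by
      push_cast; ring
    rw [harg, Int.toNat_natCast] at key
    rw [key]
    rw [hp]
    simp only
    rw [Polynomial.eval_prod]
    apply Finset.prod_congr rfl
    intro t _
    simp only [Polynomial.eval_add, Polynomial.eval_X, Polynomial.eval_C, hv]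
    push_cast
    ring
  set M : Matrix (Fin m) (Fin m) ℚ :=
    Matrix.of (fun i j : Fin m => ifac (((m:ℤ) - i) - (i : ℤ) + (j : ℤ))) with hM
  have hsub : ∀ i j : Fin m, (M.submatrix Fin.rev Fin.rev) i j
      = ifac (2*(i:ℕ) + 1 - (j:ℕ)) := by
    intro i j
    simp only [Matrix.submatrix_apply, hM, Matrix.of_apply]
    congr 1
    have h1 : ((i.rev : ℕ) : ℤ) = (m:ℤ) - 1 - (i:ℕ) := by
      have := Fin.val_rev i; have hi := i.isLt; omega
    have h2 : ((j.rev : ℕ) : ℤ) = (m:ℤ) - 1 - (j:ℕ) := by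
      have := Fin.val_rev j; have hj := j.isLt; omega
    rw [h1, h2]; ring
  have hdetA : (Matrix.of (fun i j : Fin m => (p j).eval (v i))).det
      = (∏ i : Fin m, ((2*(i:ℕ)+1).factorial : ℚ)) * M.det := by
    have hA : Matrix.of (fun i j : Fin m => (p j).eval (v i))
        = Matrix.of (fun i j : Fin m =>
            ((2*(i:ℕ)+1).factorial : ℚ) * (M.submatrix Fin.rev Fin.rev) i j) := by
      ext i j
      rw [Matrix.of_apply, Matrix.of_apply, hentry i j, hsub i j]
    rw [hA, Matrix.det_mul_column (fun i : Fin m => ((2*(i:ℕ)+1).factorial : ℚ))]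
    congr 1
    exact Matrix.det_submatrix_equiv_self Fin.revPerm M
  have hvdm : (Matrix.vandermonde v).det
      = (Matrix.of (fun i j : Fin m => (p j).eval (v i))).det :=
    Matrix.det_eval_matrixOfPolynomials_eq_det_vandermonde v p h_deg h_monic
  have hvdmval : (Matrix.vandermonde v).det
      = ∏ j ∈ Finset.range m, ((2^j * j.factorial : ℕ) : ℚ) := by
    rw [Matrix.det_vandermonde]
    have swap : (∏ i : Fin m, ∏ j ∈ Finset.Ioi i, (v j - v i))
        = ∏ j : Fin m, ∏ i ∈ Finset.Iio j, (v j - v i) := by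
      apply Finset.prod_comm'
      intro x y
      simp only [Finset.mem_univ, true_and, Finset.mem_Ioi, Finset.mem_Iio, and_true]
    rw [swap, ← Fin.prod_univ_eq_prod_range (fun j => ((2^j * j.factorial : ℕ) : ℚ)) m]
    apply Finset.prod_congr rfl
    intro j _
    have hinner : ∏ i ∈ Finset.Iio j, (v j - v i)
        = ∏ t ∈ Finset.range (j:ℕ), (2*((j:ℕ):ℚ) - 2*t) := by
      have step1 : ∏ i ∈ Finset.Iio j, (v j - v i)
          = ∏ i ∈ Finset.Iio j, (fun t : ℕ => 2*((j:ℕ):ℚ) - 2*t) (Fin.valEmbedding i) := by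
        apply Finset.prod_congr rfl
        intro i _
        simp only [hv, Fin.valEmbedding_apply]
        ring
      rw [step1, ← Finset.prod_map (Finset.Iio j) Fin.valEmbedding (fun t : ℕ => 2*((j:ℕ):ℚ) - 2*(t:ℚ)), Fin.map_valEmbedding_Iio, Nat.Iio_eq_range]
    rw [hinner]
    rw [show ((2^(j:ℕ) * (j:ℕ).factorial : ℕ) : ℚ)
        = ∏ t ∈ Finset.range (j:ℕ), ((2*t+2 : ℕ) : ℚ) by
      rw [← Nat.cast_prod, prod_two_mul_succ]]
    rw [← Finset.prod_range_reflect (fun t => ((2*t+2 : ℕ) : ℚ)) (j:ℕ)]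
    apply Finset.prod_congr rfl
    intro t ht
    rw [Finset.mem_range] at ht
    have h1 : 2*((j:ℕ) - 1 - t) + 2 = 2*(j:ℕ) - 2*t := by omega
    have h2 : ((2*(j:ℕ) - 2*t : ℕ) : ℚ) = 2*((j:ℕ):ℚ) - 2*t := by
      push_cast [Nat.cast_sub (by omega : 2*t ≤ 2*(j:ℕ))]; ring
    rw [h1, h2]
  have hfin : ∏ i : Fin m, ((2*(i:ℕ)+1).factorial : ℚ)
      = ∏ j ∈ Finset.range m, ((2*j+1).factorial : ℚ) :=
    Fin.prod_univ_eq_prod_range (fun t => ((2*t+1).factorial : ℚ)) m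
  have : Mdet m (fun i => (m : ℤ) - i) = M.det := rfl
  rw [this, ← hfin]
  rw [← hvdmval, hvdm, hdetA]
  ring

lemma doublefac (m : ℕ) :
    (∏ k ∈ Finset.Icc 1 m, (2*k-1)) * (2^m * m.factorial) = (2*m).factorial := by
  induction m with
  | zero => simp
  | succ m ih =>
    rw [Finset.prod_Icc_succ_top (by omega : 1 ≤ m + 1)]
    rw [show 2*(m+1) = (2*m+1)+1 by ring, Nat.factorial_succ, Nat.factorial_succ]
    calc (∏ k ∈ Finset.Icc 1 m, (2*k-1)) * (2*(m+1)-1) * (2^(m+1) * ((m+1) * m.factorial))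
        = ((2*m+1) * (2*(m+1))) * ((∏ k ∈ Finset.Icc 1 m, (2*k-1)) * (2^m * m.factorial)) := by
          rw [show 2*(m+1)-1 = 2*m+1 by omega, pow_succ]; ring
      _ = (2*m+1+1) * ((2*m+1) * (2*m).factorial) := by rw [ih]; ring

lemma key_identity (m : ℕ) :
    (∏ j ∈ Finset.range m, 2^j * j.factorial) * ∏ k ∈ Finset.Icc 1 m, (2*k-1)^(m+1-k)
      = ∏ j ∈ Finset.range m, (2*j+1).factorial := by
  induction m with
  | zero => simp
  | succ m ih =>
    rw [Finset.prod_range_succ, Finset.prod_range_succ,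
      Finset.prod_Icc_succ_top (by omega : 1 ≤ m + 1)]
    have hexp : ∀ k ∈ Finset.Icc 1 m, (2*k-1)^(m+1+1-k) = (2*k-1)^(m+1-k) * (2*k-1) := by
      intro k hk
      rw [Finset.mem_Icc] at hk
      rw [show m+1+1-k = (m+1-k)+1 by omega, pow_succ]
    rw [Finset.prod_congr rfl hexp,
      show m+1+1-(m+1) = 1 by omega, pow_one, show 2*(m+1)-1 = 2*m+1 by omega]
    calc (∏ j ∈ Finset.range m, 2^j * j.factorial) * (2^m * m.factorial) *
          ((∏ k ∈ Finset.Icc 1 m, (2*k-1)^(m+1-k) * (2*k-1)) * (2*m+1))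
        = ((∏ j ∈ Finset.range m, 2^j * j.factorial) * (∏ k ∈ Finset.Icc 1 m, (2*k-1)^(m+1-k))) *
            ((2*m+1) * ((∏ k ∈ Finset.Icc 1 m, (2*k-1)) * (2^m * m.factorial))) := by
          have hsplit : (∏ k ∈ Finset.Icc 1 m, (2*k-1)^(m+1-k) * (2*k-1))
              = (∏ k ∈ Finset.Icc 1 m, (2*k-1)^(m+1-k)) * (∏ k ∈ Finset.Icc 1 m, (2*k-1)) :=
            Finset.prod_mul_distrib
          rw [hsplit]; ring
      _ = (∏ j ∈ Finset.range m, (2*j+1).factorial) * (2*m+1).factorial := by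
          rw [ih, doublefac, ← Nat.factorial_succ]

def IsTab (S : Finset (ℕ × ℕ)) (t : ℕ × ℕ → ℕ) : Prop :=
  (∀ p, p ∉ S → t p = 0) ∧
  (∀ p ∈ S, 1 ≤ t p ∧ t p ≤ S.card) ∧
  Set.InjOn t S ∧
  (∀ v, 1 ≤ v → v ≤ S.card → ∃ p ∈ S, t p = v) ∧
  (∀ p ∈ S, ∀ q ∈ S, p.1 ≤ q.1 → p.2 ≤ q.2 → p ≠ q → t p < t q)

instance tabFinite (S : Finset (ℕ × ℕ)) : Finite {t // IsTab S t} := by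
  classical
  let F : {t // IsTab S t} → (S → Fin (S.card + 1)) := fun t p =>
    ⟨t.1 p.1, Nat.lt_succ_of_le ((t.2.2.1 p.1 p.2).2)⟩
  have hF : Function.Injective F := by
    rintro ⟨t, ht⟩ ⟨s, hs⟩ h
    ext p
    by_cases hp : p ∈ S
    · exact congrArg Fin.val (congrFun h ⟨p, hp⟩)
    · show t p = s p
      rw [ht.1 p hp, hs.1 p hp]
  exact Finite.of_injective F hF

lemma isTab_erase {S : Finset (ℕ × ℕ)} {t : ℕ × ℕ → ℕ} {p : ℕ × ℕ}
    (ht : IsTab S t) (hp : p ∈ S) (htp : t p = S.card) :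
    IsTab (S.erase p) (Function.update t p 0) := by
  obtain ⟨h0, hb, hinj, hsurj, hmono⟩ := ht
  refine ⟨?_, ?_, ?_, ?_, ?_⟩
  · intro q hq
    by_cases hqp : q = p
    · subst hqp; simp
    · rw [Function.update_of_ne hqp]
      exact h0 q fun hqS => hq (Finset.mem_erase.2 ⟨hqp, hqS⟩)
  · intro q hq
    obtain ⟨hqp, hqS⟩ := Finset.mem_erase.1 hq
    rw [Function.update_of_ne hqp, Finset.card_erase_of_mem hp]
    refine ⟨(hb q hqS).1, ?_⟩
    have h2 := (hb q hqS).2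
    have hne : t q ≠ S.card := fun h => hqp (hinj hqS hp (h.trans htp.symm))
    omega
  · intro q1 hq1 q2 hq2 heq
    rw [Finset.coe_erase, Set.mem_diff] at hq1 hq2
    have h1p : q1 ≠ p := fun h => hq1.2 (by simp [h])
    have h2p : q2 ≠ p := fun h => hq2.2 (by simp [h])
    rw [Function.update_of_ne h1p, Function.update_of_ne h2p] at heq
    exact hinj hq1.1 hq2.1 heq
  · intro v hv1 hv2
    rw [Finset.card_erase_of_mem hp] at hv2
    have hN : 1 ≤ S.card := Finset.card_pos.2 ⟨p, hp⟩
    obtain ⟨q, hqS, hqv⟩ := hsurj v hv1 (by omega)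
    have hqp : q ≠ p := by
      intro h; subst h; omega
    exact ⟨q, Finset.mem_erase.2 ⟨hqp, hqS⟩, by rw [Function.update_of_ne hqp]; exact hqv⟩
  · intro q1 h1 q2 h2 hle1 hle2 hne
    obtain ⟨h1p, h1S⟩ := Finset.mem_erase.1 h1
    obtain ⟨h2p, h2S⟩ := Finset.mem_erase.1 h2
    rw [Function.update_of_ne h1p, Function.update_of_ne h2p]
    exact hmono q1 h1S q2 h2S hle1 hle2 hne

lemma max_of_top {S : Finset (ℕ × ℕ)} {t : ℕ × ℕ → ℕ} {p : ℕ × ℕ}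
    (ht : IsTab S t) (hp : p ∈ S) (htp : t p = S.card) :
    ∀ q ∈ S, p.1 ≤ q.1 → p.2 ≤ q.2 → q = p := by
  intro q hq h1 h2
  by_contra hne
  have hlt := ht.2.2.2.2 p hp q hq h1 h2 (fun h => hne h.symm)
  have hb := (ht.2.1 q hq).2
  omega

lemma isTab_update {S : Finset (ℕ × ℕ)} {t' : ℕ × ℕ → ℕ} {p : ℕ × ℕ}
    (hp : p ∈ S) (hmax : ∀ q ∈ S, p.1 ≤ q.1 → p.2 ≤ q.2 → q = p)
    (ht' : IsTab (S.erase p) t') : IsTab S (Function.update t' p S.card) := by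
  obtain ⟨h0, hb, hinj, hsurj, hmono⟩ := ht'
  have hN : 1 ≤ S.card := Finset.card_pos.2 ⟨p, hp⟩
  have hcard : (S.erase p).card = S.card - 1 := Finset.card_erase_of_mem hp
  refine ⟨?_, ?_, ?_, ?_, ?_⟩
  · intro q hq
    have hqp : q ≠ p := fun h => hq (h ▸ hp)
    rw [Function.update_of_ne hqp]
    exact h0 q fun hmem => hq (Finset.mem_of_mem_erase hmem)
  · intro q hq
    by_cases hqp : q = p
    · subst hqp; simp [hN]
    · rw [Function.update_of_ne hqp]
      have := hb q (Finset.mem_erase.2 ⟨hqp, hq⟩)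
      omega
  · intro q1 hq1 q2 hq2 heq
    rw [Finset.mem_coe] at hq1 hq2
    by_cases h1p : q1 = p
    · by_cases h2p : q2 = p
      · rw [h1p, h2p]
      · rw [h1p, Function.update_self, Function.update_of_ne h2p] at heq
        have := (hb q2 (Finset.mem_erase.2 ⟨h2p, hq2⟩)).2
        omega
    · by_cases h2p : q2 = p
      · rw [h2p, Function.update_self, Function.update_of_ne h1p] at heq
        have := (hb q1 (Finset.mem_erase.2 ⟨h1p, hq1⟩)).2
        omega
      · rw [Function.update_of_ne h1p, Function.update_of_ne h2p] at heq
        exact hinj (Finset.mem_coe.2 (Finset.mem_erase.2 ⟨h1p, hq1⟩))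
          (Finset.mem_coe.2 (Finset.mem_erase.2 ⟨h2p, hq2⟩)) heq
  · intro v hv1 hv2
    by_cases hv : v = S.card
    · exact ⟨p, hp, by rw [hv, Function.update_self]⟩
    · obtain ⟨q, hq, hqv⟩ := hsurj v hv1 (by omega)
      have hqp := (Finset.mem_erase.1 hq).1
      exact ⟨q, Finset.mem_of_mem_erase hq, by rw [Function.update_of_ne hqp]; exact hqv⟩
  · intro q1 h1 q2 h2 hle1 hle2 hne
    by_cases h2p : q2 = p
    · have h1p : q1 ≠ p := fun h => hne (h.trans h2p.symm)
      rw [h2p, Function.update_self, Function.update_of_ne h1p]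
      have := (hb q1 (Finset.mem_erase.2 ⟨h1p, h1⟩)).2
      omega
    · rw [Function.update_of_ne h2p]
      by_cases h1p : q1 = p
      · exfalso
        subst h1p
        exact h2p (hmax q2 h2 hle1 hle2)
      · rw [Function.update_of_ne h1p]
        exact hmono q1 (Finset.mem_erase.2 ⟨h1p, h1⟩) q2 (Finset.mem_erase.2 ⟨h2p, h2⟩)
          hle1 hle2 hne

def corners (S : Finset (ℕ × ℕ)) : Finset (ℕ × ℕ) :=
  S.filter fun p => ∀ q ∈ S, p.1 ≤ q.1 → p.2 ≤ q.2 → q = p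

theorem card_tab_rec (S : Finset (ℕ × ℕ)) (hS : S.Nonempty) :
    Nat.card {t // IsTab S t} = ∑ p ∈ corners S, Nat.card {t // IsTab (S.erase p) t} := by
  classical
  have hN : 1 ≤ S.card := Finset.card_pos.2 hS
  set F : (Σ p : {p // p ∈ corners S}, {t // IsTab (S.erase p.1) t}) → {t // IsTab S t} :=
    fun x => ⟨Function.update x.2.1 x.1.1 S.card,
      isTab_update (Finset.mem_of_mem_filter _ x.1.2)
        (by have := (Finset.mem_filter.1 x.1.2).2; exact this) x.2.2⟩ with hF
  have hbij : Function.Bijective F := by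
    constructor
    · rintro ⟨⟨p, hpc⟩, ⟨t1, ht1⟩⟩ ⟨⟨q, hqc⟩, ⟨t2, ht2⟩⟩ heq
      have heqf : Function.update t1 p S.card = Function.update t2 q S.card :=
        congrArg Subtype.val heq
      have hpq : p = q := by
        by_contra hpq
        have h1 : Function.update t1 p S.card p = S.card := Function.update_self _ _ _
        have h2 : Function.update t2 q S.card p = t2 p := Function.update_of_ne hpq _ _
        rw [heqf] at h1
        rw [h2] at h1
        have hpS : p ∈ S := Finset.mem_of_mem_filter _ hpc
        have hpe : p ∈ S.erase q := Finset.mem_erase.2 ⟨hpq, hpS⟩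
        have := (ht2.2.1 p hpe).2
        rw [Finset.card_erase_of_mem (Finset.mem_of_mem_filter _ hqc)] at this
        omega
      subst hpq
      have ht12 : t1 = t2 := by
        funext z
        by_cases hz : z = p
        · rw [hz, ht1.1 p (Finset.notMem_erase p S), ht2.1 p (Finset.notMem_erase p S)]
        · have := congrFun heqf z
          rwa [Function.update_of_ne hz, Function.update_of_ne hz] at this
      subst ht12
      rfl
    · rintro ⟨t, ht⟩
      obtain ⟨p, hpS, htp⟩ := ht.2.2.2.1 S.card hN le_rfl
      have hmax := max_of_top ht hpS htp
      have hpc : p ∈ corners S := Finset.mem_filter.2 ⟨hpS, hmax⟩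
      refine ⟨⟨⟨p, hpc⟩, ⟨Function.update t p 0, isTab_erase ht hpS htp⟩⟩, ?_⟩
      apply Subtype.ext
      show Function.update (Function.update t p 0) p S.card = t
      rw [Function.update_idem, ← htp, Function.update_eq_self]
  rw [← Nat.card_eq_of_bijective F hbij]
  letI : Fintype {t // IsTab S t} := Fintype.ofFinite _
  letI : ∀ p : {p // p ∈ corners S}, Fintype {t // IsTab (S.erase p.1) t} :=
    fun p => Fintype.ofFinite _
  rw [Nat.card_eq_fintype_card, Fintype.card_sigma]
  rw [← Finset.sum_attach (corners S) (fun p => Nat.card {t // IsTab (S.erase p) t})]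
  apply Finset.sum_congr rfl
  intro p _
  rw [Nat.card_eq_fintype_card]

lemma tab_empty : Nat.card {t // IsTab (∅ : Finset (ℕ × ℕ)) t} = 1 := by
  rw [Nat.card_eq_one_iff_unique]
  constructor
  · constructor
    rintro ⟨t, ht⟩ ⟨s, hs⟩
    apply Subtype.ext
    funext p
    show t p = s p
    rw [ht.1 p (Finset.notMem_empty p), hs.1 p (Finset.notMem_empty p)]
  · refine ⟨⟨fun _ => 0, ?_, ?_, ?_, ?_, ?_⟩⟩
    · intro _ _; rfl
    · intro p hp; exact absurd hp (Finset.notMem_empty p)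
    · rw [Finset.coe_empty]; exact Set.injOn_empty _
    · intro v hv1 hv2; rw [Finset.card_empty] at hv2; omega
    · intro p hp; exact absurd hp (Finset.notMem_empty p)

def cells (m : ℕ) (lam : Fin m → ℕ) : Finset (ℕ × ℕ) :=
  Finset.univ.biUnion fun i : Fin m => {((i:ℕ)+1)} ×ˢ Finset.Icc 1 (lam i)

lemma mem_cells {m : ℕ} {lam : Fin m → ℕ} {p : ℕ × ℕ} :
    p ∈ cells m lam ↔ ∃ i : Fin m, p.1 = (i:ℕ)+1 ∧ 1 ≤ p.2 ∧ p.2 ≤ lam i := by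
  simp only [cells, Finset.mem_biUnion, Finset.mem_univ, true_and, Finset.mem_product,
    Finset.mem_singleton, Finset.mem_Icc]

lemma card_cells (m : ℕ) (lam : Fin m → ℕ) : (cells m lam).card = ∑ i, lam i := by
  rw [cells, Finset.card_biUnion]
  · apply Finset.sum_congr rfl
    intro i _
    rw [Finset.card_product, Finset.card_singleton, Nat.card_Icc]
    omega
  · intro i _ j _ hij
    apply Finset.disjoint_left.2
    intro p hp hq
    rw [Finset.mem_product, Finset.mem_singleton] at hp hq
    exact hij (Fin.ext (by omega))

def legal {m : ℕ} (lam : Fin m → ℕ) (i : Fin m) : Prop :=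
  1 ≤ lam i ∧ ∀ j : Fin m, i < j → lam j < lam i

instance {m : ℕ} (lam : Fin m → ℕ) (i : Fin m) : Decidable (legal lam i) := by
  unfold legal; infer_instance

lemma corners_cells {m : ℕ} (lam : Fin m → ℕ) {p : ℕ × ℕ} :
    p ∈ corners (cells m lam) ↔ ∃ i : Fin m, legal lam i ∧ p = ((i:ℕ)+1, lam i) := by
  constructor
  · intro hp
    obtain ⟨hpS, hmax⟩ := Finset.mem_filter.1 hp
    obtain ⟨i, h1, h2, h3⟩ := mem_cells.1 hpS
    have hb : p.2 = lam i := by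
      have hq : ((i:ℕ)+1, lam i) ∈ cells m lam := mem_cells.2 ⟨i, rfl, by omega, le_rfl⟩
      have := hmax _ hq (by omega) (by simpa using h3)
      have := congrArg Prod.snd this
      simpa using this.symm
    refine ⟨i, ⟨by omega, ?_⟩, ?_⟩
    · intro j hij
      by_contra hcon
      push_neg at hcon
      have hq : ((j:ℕ)+1, lam i) ∈ cells m lam := mem_cells.2 ⟨j, rfl, by omega, hcon⟩
      have := hmax _ hq (by simp [h1]; omega) (by omega)
      have := congrArg Prod.fst this
      simp [h1] at this
      omega
    · ext
      · simp [h1]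
      · simp [hb]
  · rintro ⟨i, ⟨hi1, hi2⟩, rfl⟩
    refine Finset.mem_filter.2 ⟨mem_cells.2 ⟨i, rfl, hi1, le_rfl⟩, ?_⟩
    rintro ⟨a, b⟩ hq hle1 hle2
    obtain ⟨j, hj1, hj2, hj3⟩ := mem_cells.1 hq
    simp only at hle1 hle2 hj1
    subst hj1
    by_cases hij : i = j
    · subst hij
      have : b = lam i := le_antisymm hj3 hle2
      rw [this]
    · have hlt : i < j := by
        have : (i:ℕ) < (j:ℕ) := by omega
        exact this
      have := hi2 j hlt
      omega

lemma erase_cells {m : ℕ} (lam : Fin m → ℕ) (i : Fin m) (hi : 1 ≤ lam i) :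
    (cells m lam).erase ((i:ℕ)+1, lam i) = cells m (Function.update lam i (lam i - 1)) := by
  ext p
  rw [Finset.mem_erase, mem_cells, mem_cells]
  constructor
  · rintro ⟨hne, j, h1, h2, h3⟩
    refine ⟨j, h1, h2, ?_⟩
    by_cases hij : j = i
    · subst hij
      rw [Function.update_self]
      have : p ≠ ((j:ℕ)+1, lam j) := hne
      have hp2 : p.2 ≠ lam j ∨ p.1 ≠ (j:ℕ)+1 := by
        by_contra hcon
        push_neg at hcon
        exact this (Prod.ext hcon.2 hcon.1)
      omega
    · rw [Function.update_of_ne hij]; exact h3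
  · rintro ⟨j, h1, h2, h3⟩
    by_cases hij : j = i
    · subst hij
      rw [Function.update_self] at h3
      refine ⟨?_, j, h1, h2, by omega⟩
      intro hcon
      have := congrArg Prod.snd hcon
      simp at this
      omega
    · rw [Function.update_of_ne hij] at h3
      refine ⟨?_, j, h1, h2, h3⟩
      intro hcon
      have h5 := congrArg Prod.fst hcon
      rw [h1] at h5
      simp at h5
      exact hij (Fin.ext h5)

lemma antitone_update {m : ℕ} {lam : Fin m → ℕ} (hlam : Antitone lam) {i : Fin m}
    (hleg : legal lam i) : Antitone (Function.update lam i (lam i - 1)) := by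
  intro a b hab
  by_cases hai : a = i <;> by_cases hbi : b = i
  · rw [hai, hbi]
  · rw [hai, Function.update_self, Function.update_of_ne hbi]
    have hib : i ≤ b := by rw [← hai]; exact hab
    have hlt : i < b := lt_of_le_of_ne hib (Ne.symm hbi)
    have := hleg.2 b hlt
    omega
  · rw [hbi, Function.update_self, Function.update_of_ne hai]
    have hai' : a ≤ i := by rw [← hbi]; exact hab
    have := hlam hai'
    omega
  · rw [Function.update_of_ne hai, Function.update_of_ne hbi]
    exact hlam hab

lemma Mdet_illegal {m : ℕ} {lam : Fin m → ℕ} (hlam : Antitone lam) {i : Fin m}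
    (hileg : ¬ legal lam i) :
    Mdet m (Function.update (fun k => (lam k : ℤ)) i ((lam i : ℤ) - 1)) = 0 := by
  by_cases hex : ∃ j : Fin m, i < j
  · obtain ⟨j0, hj0⟩ := hex
    have hi1 : (i:ℕ) + 1 < m := by
      have := j0.isLt
      have : (i:ℕ) < (j0:ℕ) := hj0
      omega
    set i' : Fin m := ⟨(i:ℕ)+1, hi1⟩ with hi'
    have hii' : i < i' := by
      show (i:ℕ) < (i':ℕ); simp [hi']
    by_cases heq : lam i' = lam i
    · apply Mdet_eq_zero_of_eq m _ (ne_of_lt hii')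
      rw [Function.update_self, Function.update_of_ne (ne_of_gt hii')]
      rw [heq]
      simp [hi']
      push_cast
      ring
    · exfalso
      apply hileg
      have hlt : lam i' < lam i := lt_of_le_of_ne (hlam (le_of_lt hii')) heq
      constructor
      · omega
      · intro j hj
        have hj' : i' ≤ j := by
          show (i':ℕ) ≤ (j:ℕ)
          have : (i:ℕ) < (j:ℕ) := hj
          simp [hi']; omega
        have := hlam hj'
        omega
  · push_neg at hex
    have hitop : (i:ℕ) = m - 1 := by
      by_contra hcon
      have him : (i:ℕ) < m := i.isLt
      have h2 : (i:ℕ) + 1 < m := by omega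
      have h3 := hex ⟨(i:ℕ)+1, h2⟩
      have h4 : (i:ℕ)+1 ≤ (i:ℕ) := h3
      omega
    have hlam0 : lam i = 0 := by
      by_contra hcon
      exact hileg ⟨by omega, fun j hj => absurd (hex j) (not_le.2 hj)⟩
    apply Mdet_eq_zero_of_neg m _ (i := i)
    rw [Function.update_self, hlam0]
    have hm : 1 ≤ m := by have := i.isLt; omega
    rw [hitop]
    push_cast [Nat.cast_sub hm]
    ring_nf
    omega

theorem count_eq (m : ℕ) : ∀ (N : ℕ) (lam : Fin m → ℕ), Antitone lam → (∑ i, lam i) = N →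
    (Nat.card {t // IsTab (cells m lam) t} : ℚ)
      = (N.factorial : ℚ) * Mdet m (fun i => (lam i : ℤ)) := by
  intro N
  induction N with
  | zero =>
    intro lam _ hsum
    have hz : ∀ i, lam i = 0 := by
      intro i
      exact Finset.sum_eq_zero_iff.1 hsum i (Finset.mem_univ i)
    have hcells : cells m lam = ∅ := by
      rw [Finset.eq_empty_iff_forall_notMem]
      intro p hp
      obtain ⟨i, h1, h2, h3⟩ := mem_cells.1 hp
      rw [hz i] at h3
      omega
    have hμ : (fun i : Fin m => (lam i : ℤ)) = (fun _ => 0) := funext fun i => by rw [hz i]; rfl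
    rw [hcells, tab_empty, hμ, Mdet_zero]
    simp
  | succ N ih =>
    intro lam hlam hsum
    have hne : (cells m lam).Nonempty := by
      rw [← Finset.card_pos, card_cells, hsum]; omega
    rw [card_tab_rec _ hne]
    set L : Finset (Fin m) := Finset.univ.filter (legal lam) with hL
    have hcor : corners (cells m lam) = L.image (fun i : Fin m => ((i:ℕ)+1, lam i)) := by
      ext p
      rw [corners_cells]
      simp only [Finset.mem_image, hL, Finset.mem_filter, Finset.mem_univ, true_and]
      constructor
      · rintro ⟨i, h1, h2⟩; exact ⟨i, h1, h2.symm⟩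
      · rintro ⟨i, h1, h2⟩; exact ⟨i, h1, h2.symm⟩
    rw [hcor, Finset.sum_image (by
      intro a _ b _ h
      have := congrArg Prod.fst h
      simp only at this
      exact Fin.ext (by omega))]
    have hterm : ∀ i ∈ L,
        (Nat.card {t // IsTab ((cells m lam).erase ((i:ℕ)+1, lam i)) t} : ℚ)
          = (N.factorial : ℚ)
            * Mdet m (Function.update (fun k => (lam k : ℤ)) i ((lam i : ℤ) - 1)) := by
      intro i hiL
      have hleg : legal lam i := (Finset.mem_filter.1 hiL).2
      rw [erase_cells lam i hleg.1]
      have hsum' : ∑ k, Function.update lam i (lam i - 1) k = N := by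
        rw [Finset.sum_update_of_mem (Finset.mem_univ i)]
        have h2 : ∑ k, lam k = lam i + ∑ k ∈ Finset.univ \ {i}, lam k := by
          rw [Finset.sum_eq_add_sum_sdiff_singleton_of_mem (Finset.mem_univ i)]
        have h3 := hleg.1
        omega
      have hcast : (fun k => ((Function.update lam i (lam i - 1) k : ℕ) : ℤ))
          = Function.update (fun k => (lam k : ℤ)) i ((lam i : ℤ) - 1) := by
        funext k
        by_cases hk : k = i
        · rw [hk, Function.update_self, Function.update_self]
          have := hleg.1
          omega
        · rw [Function.update_of_ne hk, Function.update_of_ne hk]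
      rw [ih _ (antitone_update hlam hleg) hsum', hcast]
    push_cast
    rw [Finset.sum_congr rfl hterm, ← Finset.mul_sum]
    have hext : (∑ i ∈ L, Mdet m (Function.update (fun k => (lam k : ℤ)) i ((lam i : ℤ) - 1)))
        = ∑ i : Fin m, Mdet m (Function.update (fun k => (lam k : ℤ)) i
            (((fun k => (lam k : ℤ)) i) - 1)) := by
      apply Finset.sum_subset (Finset.subset_univ L)
      intro i _ hiL
      have hnl : ¬ legal lam i := by
        intro h
        exact hiL (Finset.mem_filter.2 ⟨Finset.mem_univ i, h⟩)
      exact Mdet_illegal hlam hnl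
    rw [hext, sum_Mdet m (fun k => (lam k : ℤ))]
    have hsμ : (∑ i, ((lam i : ℤ))) = ((N:ℤ)+1) := by
      rw [← Nat.cast_sum]
      exact_mod_cast hsum
    rw [hsμ]
    push_cast [Nat.factorial_succ]
    ring

/-- the number of standard Young tableaux of staircase shape `δ_n`
equals `N! / (1^{n-1} ⋅ 3^{n-2} ⋯ (2n-3)^1)`, i.e.
`N! / ∏_{k=1}^{n-1} (2k-1)^{n-k}`, where `N = n(n-1)/2`. -/
theorem card_staircase_SYT (n : ℕ) (hn : 2 ≤ n) :
    Nat.card {t : ℕ × ℕ → ℕ // IsStaircaseSYT n t}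
      = Nat.factorial (n * (n - 1) / 2)
        / ∏ k ∈ Finset.Icc 1 (n - 1), (2 * k - 1) ^ (n - k) := by
  classical
  set m := n - 1 with hm
  have hm1 : 1 ≤ m := by omega
  have hmn : m + 1 = n := by omega
  set lam : Fin m → ℕ := fun i => m - (i:ℕ) with hlam_def
  have hlam : Antitone lam := by
    intro a b hab
    have hab' : (a:ℕ) ≤ (b:ℕ) := hab
    simp only [hlam_def]
    omega
  have hstair : staircase n = cells m lam := by
    ext p
    rw [mem_cells]
    simp only [staircase, Finset.mem_filter, Finset.mem_Icc, Prod.le_def, hlam_def]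
    constructor
    · rintro ⟨⟨⟨h1, h2⟩, h3, h4⟩, h5⟩
      refine ⟨⟨p.1 - 1, by omega⟩, by show p.1 = p.1 - 1 + 1; omega, h2,
        by show p.2 ≤ m - (p.1 - 1); omega⟩
    · rintro ⟨i, h1, h2, h3⟩
      have hi := i.isLt
      refine ⟨⟨⟨by omega, by omega⟩, by omega, by omega⟩, by omega⟩
  set NN := ∑ i, lam i with hNN
  have hNN2 : NN * 2 = m * (m + 1) := by
    rw [hNN]
    rw [Fin.sum_univ_eq_sum_range (fun t => m - t) m]
    rw [← Finset.sum_range_reflect]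
    have hrfl : ∀ t ∈ Finset.range m, m - (m - 1 - t) = t + 1 := by
      intro t ht; rw [Finset.mem_range] at ht; omega
    rw [Finset.sum_congr rfl hrfl, Finset.sum_add_distrib, Finset.sum_const, Finset.card_range,
      smul_eq_mul, mul_one]
    have hg := Finset.sum_range_id_mul_two m
    have hB : m * (m + 1) = m * (m - 1) + 2 * m := by
      cases m with
      | zero => rfl
      | succ m' => simp; ring
    set K := ∑ i ∈ Finset.range m, i
    set A := m * (m - 1)
    set B := m * (m + 1)
    omega
  have hdiv : n * (n - 1) / 2 = NN := by
    have hx : n * (n - 1) = NN * 2 := by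
      rw [hNN2, ← hmn]
      simp
      ring
    rw [hx, Nat.mul_div_cancel _ (by norm_num)]
  have hcardS : (staircase n).card = NN := by rw [hstair, card_cells]
  have hiff : ∀ t, IsStaircaseSYT n t ↔ IsTab (staircase n) t := by
    intro t
    unfold IsStaircaseSYT IsTab
    rw [hcardS, hdiv]
  have hcount : Nat.card {t // IsStaircaseSYT n t} = Nat.card {t // IsTab (cells m lam) t} := by
    rw [← hstair]
    exact Nat.card_congr (Equiv.subtypeEquivRight hiff)
  have hμ : (fun i : Fin m => (lam i : ℤ)) = (fun i : Fin m => (m : ℤ) - (i:ℕ)) := by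
    funext i
    have := i.isLt
    simp only [hlam_def]
    omega
  have hQ : (Nat.card {t // IsTab (cells m lam) t} : ℚ)
      = (NN.factorial : ℚ) * Mdet m (fun i => (m:ℤ) - (i:ℕ)) := by
    rw [← hμ]
    exact count_eq m NN lam hlam rfl
  set C := Nat.card {t // IsStaircaseSYT n t} with hC
  set P := ∏ k ∈ Finset.Icc 1 (n-1), (2*k-1)^(n-k) with hP
  have hPP : P = ∏ k ∈ Finset.Icc 1 m, (2*k-1)^(m+1-k) := by
    apply Finset.prod_congr rfl
    intro k hk
    congr 1
    omega
  have hPpos : 0 < P := by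
    rw [hPP]
    apply Finset.prod_pos
    intro k hk
    apply pow_pos
    rw [Finset.mem_Icc] at hk
    omega
  have hD : (∏ j ∈ Finset.range m, ((2*j+1).factorial : ℚ)) ≠ 0 := by
    rw [Finset.prod_ne_zero_iff]
    intro j _
    exact_mod_cast (Nat.factorial_pos _).ne'
  have hmain : (C : ℚ) * P = (NN.factorial : ℚ) := by
    have h1 := Mdet_staircase m
    have h2q : (∏ j ∈ Finset.range m, ((2^j * j.factorial : ℕ):ℚ)) * (P:ℚ)
        = ∏ j ∈ Finset.range m, ((2*j+1).factorial : ℚ) := by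
      rw [hPP]
      rw [← Nat.cast_prod, ← Nat.cast_prod, ← Nat.cast_mul, key_identity m]
    have hC' : (C:ℚ) = (NN.factorial : ℚ) * Mdet m (fun i => (m:ℤ) - (i:ℕ)) := by
      rw [hcount]; exact hQ
    apply mul_right_cancel₀ hD
    calc (C:ℚ) * P * (∏ j ∈ Finset.range m, ((2*j+1).factorial : ℚ))
        = (NN.factorial : ℚ) * ((Mdet m (fun i => (m:ℤ) - (i:ℕ))
            * ∏ j ∈ Finset.range m, ((2*j+1).factorial : ℚ)) * P) := by
          rw [hC']; ring
      _ = (NN.factorial : ℚ) * ((∏ j ∈ Finset.range m, ((2^j * j.factorial : ℕ):ℚ)) * P) := by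
          rw [h1]
      _ = (NN.factorial : ℚ) * ∏ j ∈ Finset.range m, ((2*j+1).factorial : ℚ) := by
          rw [h2q]
      _ = _ := by ring
  have hnat : C * P = NN.factorial := by exact_mod_cast hmain
  rw [hdiv]
  exact (Nat.div_eq_of_eq_mul_left hPpos hnat.symm).symm
end
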